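/- arXiv:2406.13014 — 10 statements merged into one kernel-verified Lean document; each statement's English description precedes it below -/
import Mathlib

section
/- Let f be a function analytic in a neighborhood of 0 in ℂ with f(0) = 0, such that f maps points of the upper half-plane (sufficiently close to 0) into the closed upper half-plane. If f is not identically zero, then f'(0) > 0. -/
open Complex

/-- If `f` is analytic at `0`, `f 0 = 0`, and `f` maps points of the upper
half-plane near `0` into the closed upper half-plane, then either `f` vanishes
identically near `0` or `f'(0)` is a positive real number. -/
theorem stmt_0 (f : ℂ → ℂ) (hf : AnalyticAt ℂ f 0) (h0 : f 0 = 0)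
    (hmap : ∃ ε > 0, ∀ z : ℂ, ‖z‖ < ε → 0 < z.im → 0 ≤ (f z).im)
    (hnz : ¬ (∀ᶠ z in nhds (0 : ℂ), f z = 0)) :
    (deriv f 0).im = 0 ∧ 0 < (deriv f 0).re := by
  obtain ⟨ε, hε, hε'⟩ := hmap
  have hord : analyticOrderAt f 0 ≠ ⊤ := by
    simp only [ne_eq, analyticOrderAt_eq_top]; exact hnz
  obtain ⟨n, hn⟩ : ∃ n : ℕ, analyticOrderAt f 0 = n := by
    lift analyticOrderAt f 0 to ℕ using hord with n hn
    exact ⟨n, rfl⟩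
  obtain ⟨g, hg, hgne, heq⟩ := (hf.analyticOrderAt_eq_natCast (n := n)).mp hn
  set c := g 0 with hc
  -- n ≥ 1
  have hn1 : 1 ≤ n := by
    by_contra h
    push_neg at h
    interval_cases n
    have := heq.self_of_nhds
    simp [h0] at this
    exact hgne this.symm
  -- key limit fact
  have H : ∀ w : ℂ, 0 < w.im → 0 ≤ (c * w ^ n).im := by
    intro w hw
    have hwne : w ≠ 0 := by
      intro h; rw [h] at hw; simp at hw
    have htend : Filter.Tendsto (fun t : ℝ => (t : ℂ) * w) (nhdsWithin 0 (Set.Ioi 0)) (nhds 0) := by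
      have : Filter.Tendsto (fun t : ℝ => (t : ℂ) * w) (nhds 0) (nhds 0) := by
        have : Filter.Tendsto (fun t : ℝ => (t : ℂ)) (nhds 0) (nhds 0) := by
          exact_mod_cast Complex.continuous_ofReal.tendsto 0
        simpa using this.mul_const w
      exact this.mono_left nhdsWithin_le_nhds
    -- eventually the hypothesis applies
    have hev : ∀ᶠ t : ℝ in nhdsWithin 0 (Set.Ioi 0),
        0 ≤ ((w ^ n) * g ((t : ℂ) * w)).im := by
      have h1 : ∀ᶠ t : ℝ in nhdsWithin 0 (Set.Ioi 0), ‖(t : ℂ) * w‖ < ε := by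
        have := htend (Metric.ball_mem_nhds (0 : ℂ) hε)
        filter_upwards [this] with t ht
        simpa [dist_eq_norm] using ht
      have h2 : ∀ᶠ t : ℝ in nhdsWithin 0 (Set.Ioi 0),
          f ((t : ℂ) * w) = ((t : ℂ) * w) ^ n • g ((t : ℂ) * w) :=
        htend.eventually (by simpa using heq)
      have h3 : ∀ᶠ t : ℝ in nhdsWithin 0 (Set.Ioi 0), (0 : ℝ) < t :=
        self_mem_nhdsWithin
      filter_upwards [h1, h2, h3] with t h1 h2 h3
      have him : 0 < ((t : ℂ) * w).im := by
        simp [Complex.mul_im]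
        positivity
      have := hε' _ h1 him
      rw [h2] at this
      have hrw : (((t : ℂ) * w) ^ n • g ((t : ℂ) * w)).im
          = t ^ n * ((w ^ n) * g ((t : ℂ) * w)).im := by
        rw [smul_eq_mul, mul_pow, mul_assoc]
        simp [Complex.mul_im, ← Complex.ofReal_pow]
      rw [hrw] at this
      have htn : (0 : ℝ) < t ^ n := by positivity
      nlinarith
    have hlim : Filter.Tendsto (fun t : ℝ => ((w ^ n) * g ((t : ℂ) * w)).im)
        (nhdsWithin 0 (Set.Ioi 0)) (nhds ((w ^ n * c).im)) := by
      have hgc : Filter.Tendsto (fun t : ℝ => g ((t : ℂ) * w))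
          (nhdsWithin 0 (Set.Ioi 0)) (nhds c) := by
        exact (hg.continuousAt.tendsto.comp htend)
      exact (Complex.continuous_im.tendsto _).comp ((tendsto_const_nhds.mul hgc))
    have := ge_of_tendsto hlim hev
    simpa [mul_comm] using this
  -- case n ≥ 2 is impossible
  have hn2 : n = 1 := by
    by_contra hne
    have hn2 : 2 ≤ n := by omega
    have key : ∀ x : ℝ, 0 < x → x < n * Real.pi →
        0 ≤ c.re * Real.sin x + c.im * Real.cos x := by
      intro x hx hx'
      have hnpos : (0 : ℝ) < n := by positivity
      have h1 : 0 < x / n := by positivity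
      have h2 : x / n < Real.pi := by
        rw [div_lt_iff₀ hnpos]; linarith [hx', mul_comm (n : ℝ) Real.pi]
      have him : 0 < (Complex.exp ((x / n : ℝ) * I)).im := by
        rw [Complex.exp_ofReal_mul_I_im]
        exact Real.sin_pos_of_pos_of_lt_pi h1 h2
      have := H _ him
      have hpow : (Complex.exp ((x / n : ℝ) * I)) ^ n = Complex.exp ((x : ℝ) * I) := by
        rw [← Complex.exp_nat_mul]
        have hnC : (n : ℂ) ≠ 0 := by
          exact_mod_cast Nat.cast_ne_zero.mpr (by omega)
        congr 1
        push_cast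
        field_simp
      rw [hpow] at this
      simpa [Complex.mul_im, Complex.exp_ofReal_mul_I_re, Complex.exp_ofReal_mul_I_im] using this
    have pi_pos := Real.pi_pos
    have hb : ∀ x : ℝ, 0 < x → x ≤ 3 * Real.pi / 2 → 0 ≤ c.re * Real.sin x + c.im * Real.cos x := by
      intro x hx hx'
      apply key x hx
      have : 3 * Real.pi / 2 < 2 * Real.pi := by linarith
      have h2n : (2 : ℝ) ≤ n := by exact_mod_cast hn2
      nlinarith
    have k1 := hb (Real.pi / 2) (by positivity) (by linarith)
    rw [Real.sin_pi_div_two, Real.cos_pi_div_two] at k1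
    have k2 := hb (3 * Real.pi / 2) (by positivity) le_rfl
    have hs : Real.sin (3 * Real.pi / 2) = -1 := by
      have : (3 : ℝ) * Real.pi / 2 = Real.pi + Real.pi / 2 := by ring
      rw [this, Real.sin_add]; simp
    have hcos : Real.cos (3 * Real.pi / 2) = 0 := by
      have : (3 : ℝ) * Real.pi / 2 = Real.pi + Real.pi / 2 := by ring
      rw [this, Real.cos_add]; simp
    rw [hs, hcos] at k2
    have hre : c.re = 0 := by linarith
    have k3 := hb Real.pi pi_pos (by linarith)
    rw [Real.sin_pi, Real.cos_pi] at k3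
    have k4 := hb (Real.pi / 4) (by positivity) (by linarith)
    rw [Real.sin_pi_div_four, Real.cos_pi_div_four] at k4
    have hsqrt : (0 : ℝ) < Real.sqrt 2 / 2 := by positivity
    have him : c.im = 0 := by nlinarith
    exact hgne (Complex.ext hre him)
  subst hn2
  -- now f z = z * g z near 0, and conditions on c
  have Hc : ∀ x : ℝ, 0 ≤ c.re + c.im * x := by
    intro x
    have him : (0:ℝ) < ((x : ℂ) + I).im := by simp
    have := H _ him
    simpa [Complex.mul_im, Complex.add_im, Complex.add_re, Complex.I_im, Complex.I_re] using this
  have him0 : c.im = 0 := by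
    rcases lt_trichotomy c.im 0 with h | h | h
    · have := Hc ((-c.re - 1) / c.im)
      rw [mul_div_cancel₀ _ (ne_of_lt h)] at this
      linarith
    · exact h
    · have := Hc ((-c.re - 1) / c.im)
      rw [mul_div_cancel₀ _ (ne_of_gt h)] at this
      linarith
  have hre0 : 0 < c.re := by
    have := Hc 0
    rcases lt_or_eq_of_le (by linarith : (0:ℝ) ≤ c.re) with h | h
    · exact h
    · exact absurd (Complex.ext h.symm him0) hgne
  -- deriv f 0 = c
  have hderiv : deriv f 0 = c := by
    have heq' : f =ᶠ[nhds (0 : ℂ)] fun z => z * g z := by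
      filter_upwards [heq] with z hz
      simpa using hz
    rw [Filter.EventuallyEq.deriv_eq heq']
    have hd : HasDerivAt (fun z : ℂ => z * g z) (1 * g 0 + 0 * deriv g 0) 0 :=
      (hasDerivAt_id 0).mul hg.differentiableAt.hasDerivAt
    simpa using hd.deriv
  rw [hderiv]
  exact ⟨him0, hre0⟩
end

section
/- Let φ be analytic near 0 in ℂ^d with φ(0) = 0, and suppose z + φ(x) ≠ 0 whenever Im z > 0 and x lies in a small polydisk neighborhood of 0 with all Im x_j > 0. Then every component of ∇φ(0) is a nonnegative real number, and Im φ(x) ≥ 0 for all real x sufficiently close to 0. -/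
open Complex Filter Topology

set_option maxHeartbeats 1000000

private lemma slope_im' (g : ℝ → ℂ) (hg0 : g 0 = 0) (t : ℝ) :
    (slope g 0 t).im = t⁻¹ * (g t).im := by
  simp [slope, hg0, Complex.smul_im]

private lemma aux_right (g : ℝ → ℂ) (c : ℂ) (hg : HasDerivAt g c 0) (hg0 : g 0 = 0)
    (h : ∀ᶠ t in 𝓝[>] (0:ℝ), 0 ≤ (g t).im) : 0 ≤ c.im := by
  have hs : Tendsto (slope g 0) (𝓝[≠] (0:ℝ)) (𝓝 c) :=
    hasDerivAt_iff_tendsto_slope.1 hg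
  have hs' : Tendsto (fun t => (slope g 0 t).im) (𝓝[>] (0:ℝ)) (𝓝 c.im) :=
    (Complex.continuous_im.continuousAt.tendsto.comp
      (hs.mono_left (nhdsWithin_mono _ (fun t ht => ne_of_gt ht))))
  refine ge_of_tendsto hs' ?_
  filter_upwards [h, self_mem_nhdsWithin] with t ht ht'
  rw [slope_im' g hg0]
  have : (0:ℝ) < t := ht'
  positivity

private lemma aux_left (g : ℝ → ℂ) (c : ℂ) (hg : HasDerivAt g c 0) (hg0 : g 0 = 0)
    (h : ∀ᶠ t in 𝓝[<] (0:ℝ), 0 ≤ (g t).im) : c.im ≤ 0 := by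
  have hs : Tendsto (slope g 0) (𝓝[≠] (0:ℝ)) (𝓝 c) :=
    hasDerivAt_iff_tendsto_slope.1 hg
  have hs' : Tendsto (fun t => (slope g 0 t).im) (𝓝[<] (0:ℝ)) (𝓝 c.im) :=
    (Complex.continuous_im.continuousAt.tendsto.comp
      (hs.mono_left (nhdsWithin_mono _ (fun t ht => ne_of_lt ht))))
  refine le_of_tendsto hs' ?_
  filter_upwards [h, self_mem_nhdsWithin] with t ht ht'
  rw [slope_im' g hg0]
  exact mul_nonpos_of_nonpos_of_nonneg (inv_nonpos.2 (le_of_lt ht')) ht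

private lemma sq_deriv' : HasDerivAt (fun t : ℝ => I * ((t:ℂ)) * ((t:ℂ))) 0 0 := by
  have hc : HasDerivAt (fun t : ℝ => ((t:ℂ))) 1 0 := (hasDerivAt_id (0:ℝ)).ofReal_comp
  exact ((hc.const_mul I).mul hc).congr_deriv (by simp)

private lemma curve1_deriv (d : ℕ) (j : Fin d) :
    HasDerivAt (fun t : ℝ => (fun k : Fin d => if k = j then I * t else I * t * t))
      (I • (Pi.single j 1 : Fin d → ℂ)) 0 := by
  rw [hasDerivAt_pi]
  intro k
  by_cases hk : k = j
  · simp only [hk, if_pos rfl]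
    have h1 : HasDerivAt (fun t : ℝ => ((t:ℂ))) 1 0 := (hasDerivAt_id (0:ℝ)).ofReal_comp
    simpa [hk, Pi.single_apply] using h1.const_mul I
  · simp only [if_neg hk]
    have hz : (I • (Pi.single j 1 : Fin d → ℂ)) k = 0 := by simp [Pi.single_apply, hk]
    rw [hz]; exact sq_deriv'

private lemma curve2_deriv (d : ℕ) (j : Fin d) :
    HasDerivAt (fun t : ℝ => (fun k : Fin d => if k = j then (t:ℂ) + I * t * t else I * t * t))
      (Pi.single j 1 : Fin d → ℂ) 0 := by
  rw [hasDerivAt_pi]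
  intro k
  by_cases hk : k = j
  · simp only [hk, if_pos rfl]
    have h1 : HasDerivAt (fun t : ℝ => ((t:ℂ))) 1 0 := (hasDerivAt_id (0:ℝ)).ofReal_comp
    convert h1.add sq_deriv' using 1; rfl; simp [hk, Pi.single_apply]
  · simp only [if_neg hk]
    have hz : (Pi.single j 1 : Fin d → ℂ) k = 0 := by simp [Pi.single_apply, hk]
    rw [hz]; exact sq_deriv'

/-- If `φ` is analytic at `0 ∈ ℂ^d`, `φ 0 = 0`, and `z + φ x ≠ 0` whenever
`Im z > 0` and `x` lies in a small polydisk with all `Im x_j > 0`, then every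
component of `∇φ(0)` is a nonnegative real number and `Im φ(x) ≥ 0` for real
`x` near `0`. -/
theorem stmt_1 (d : ℕ) (φ : (Fin d → ℂ) → ℂ) (hφ : AnalyticAt ℂ φ 0)
    (h0 : φ 0 = 0)
    (hstable : ∃ ε > 0, ∀ (x : Fin d → ℂ) (z : ℂ),
      (∀ j, 0 < (x j).im) → (∀ j, ‖x j‖ < ε) → 0 < z.im → ‖z‖ < ε →
        z + φ x ≠ 0) :
    (∀ j : Fin d, (fderiv ℂ φ 0 (Pi.single j 1)).im = 0 ∧
        0 ≤ (fderiv ℂ φ 0 (Pi.single j 1)).re) ∧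
    (∃ ε > 0, ∀ x : Fin d → ℝ, (∀ j, |x j| < ε) →
        0 ≤ (φ (fun j => (x j : ℂ))).im) := by
  obtain ⟨ε, hε, hst⟩ := hstable
  -- continuity at 0: get δ₁ with ‖x‖ < δ₁ → ‖φ x‖ < ε
  obtain ⟨δ₁, hδ₁, hsmall⟩ : ∃ δ > 0, ∀ x : Fin d → ℂ, dist x 0 < δ → dist (φ x) (φ 0) < ε :=
    Metric.continuousAt_iff.1 hφ.continuousAt ε hε
  -- analyticity (hence continuity) on a ball of radius r
  obtain ⟨r, hr, hana⟩ : ∃ r > 0, ∀ y : Fin d → ℂ, dist y 0 < r → AnalyticAt ℂ φ y :=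
    Metric.eventually_nhds_iff.1 hφ.eventually_analyticAt
  set δ : ℝ := min (min δ₁ ε) r with hδdef
  have hδ : 0 < δ := lt_min (lt_min hδ₁ hε) hr
  have hδδ₁ : δ ≤ δ₁ := (min_le_left _ _).trans (min_le_left _ _)
  have hδε : δ ≤ ε := (min_le_left _ _).trans (min_le_right _ _)
  have hδr : δ ≤ r := min_le_right _ _
  -- key positivity lemma on the polydisk intersected with the upper octant
  have hpos : ∀ x : Fin d → ℂ, (∀ j, 0 < (x j).im) → ‖x‖ < δ → 0 ≤ (φ x).im := by
    intro x him hx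
    by_contra hneg
    push_neg at hneg
    have h1 : ‖φ x‖ < ε := by
      have := hsmall x (by simpa using lt_of_lt_of_le hx hδδ₁)
      simpa [h0] using this
    refine hst x (-φ x) him (fun j => lt_of_lt_of_le (lt_of_le_of_lt (norm_le_pi_norm x j) hx) hδε)
      (by simpa using hneg) (by simpa using h1) ?_
    simp
  constructor
  · -- derivative part
    intro j
    set L : (Fin d → ℂ) →L[ℂ] ℂ := fderiv ℂ φ 0 with hL
    have hdφ : HasFDerivAt φ L 0 := hφ.differentiableAt.hasFDerivAt
    have hR : HasFDerivAt φ (L.restrictScalars ℝ) 0 := hdφ.restrictScalars ℝ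
    set c : ℂ := L (Pi.single j 1) with hc
    -- curve 1 : t ↦ (I t, I t², …)
    set γ : ℝ → (Fin d → ℂ) := fun t => fun k => if k = j then I * t else I * t * t with hγ
    have hγ0 : γ 0 = 0 := by funext k; simp [hγ]
    have hgγ : HasDerivAt (φ ∘ γ) ((L.restrictScalars ℝ) (I • (Pi.single j 1 : Fin d → ℂ))) 0 :=
      HasFDerivAt.comp_hasDerivAt 0 (by rw [hγ0]; exact hR) (curve1_deriv d j)
    have hval1 : (L.restrictScalars ℝ) (I • (Pi.single j 1 : Fin d → ℂ)) = I * c := by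
      rw [show ((L.restrictScalars ℝ) (I • (Pi.single j 1 : Fin d → ℂ)) : ℂ)
        = L (I • (Pi.single j 1 : Fin d → ℂ)) from rfl, map_smul, smul_eq_mul]
    rw [hval1] at hgγ
    have hev1 : ∀ᶠ t in 𝓝[>] (0:ℝ), 0 ≤ ((φ ∘ γ) t).im := by
      filter_upwards [Ioo_mem_nhdsGT_of_mem
        (Set.mem_Ico.2 ⟨le_refl (0:ℝ), lt_min hδ one_pos⟩)] with t ht
      obtain ⟨ht0, htδ⟩ := ht
      have htδ' : t < δ := lt_of_lt_of_le htδ (min_le_left _ _)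
      have ht1 : t < 1 := lt_of_lt_of_le htδ (min_le_right _ _)
      refine hpos (γ t) (fun k => ?_) ?_
      · by_cases hk : k = j
        · simp [hγ, hk, ht0]
        · simp [hγ, hk]; positivity
      · rw [pi_norm_lt_iff hδ]
        intro k
        by_cases hk : k = j
        · simpa [hγ, hk, abs_of_pos ht0] using htδ'
        · have : ‖γ t k‖ = |t| * |t| := by simp [hγ, hk, abs_mul]
          rw [this, abs_of_pos ht0]
          nlinarith
    have h2 : 0 ≤ (I * c).im :=
      aux_right (φ ∘ γ) (I * c) hgγ (by simp [Function.comp, hγ0, h0]) hev1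
    have hre : 0 ≤ c.re := by simpa using h2
    -- curve 2 : t ↦ (t + I t², I t², …)
    set η : ℝ → (Fin d → ℂ) :=
      fun t => fun k => if k = j then (t:ℂ) + I * t * t else I * t * t with hη
    have hη0 : η 0 = 0 := by funext k; simp [hη]
    have hgη : HasDerivAt (φ ∘ η) ((L.restrictScalars ℝ) (Pi.single j 1 : Fin d → ℂ)) 0 :=
      HasFDerivAt.comp_hasDerivAt 0 (by rw [hη0]; exact hR) (curve2_deriv d j)
    have hval2 : (L.restrictScalars ℝ) (Pi.single j 1 : Fin d → ℂ) = c := rfl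
    rw [hval2] at hgη
    have hkey : ∀ t : ℝ, t ≠ 0 → |t| < min (δ/2) 1 → 0 ≤ ((φ ∘ η) t).im := by
      intro t ht0 htm
      have htδ : |t| < δ/2 := lt_of_lt_of_le htm (min_le_left _ _)
      have ht1 : |t| < 1 := lt_of_lt_of_le htm (min_le_right _ _)
      have htt : 0 < t * t := mul_self_pos.2 ht0
      refine hpos (η t) (fun k => ?_) ?_
      · by_cases hk : k = j
        · simpa [hη, hk] using htt
        · simpa [hη, hk] using htt
      · rw [pi_norm_lt_iff hδ]
        intro k
        have habs : |t| * |t| ≤ |t| := by nlinarith [abs_nonneg t]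
        by_cases hk : k = j
        · have : ‖η t k‖ ≤ |t| + |t| * |t| := by
            simp only [hη, hk, if_pos rfl]
            refine (norm_add_le _ _).trans ?_
            simp [abs_mul]
          linarith
        · have : ‖η t k‖ = |t| * |t| := by simp [hη, hk, abs_mul]
          linarith
    have hm : 0 < min (δ/2) 1 := lt_min (by linarith) one_pos
    have hev2 : ∀ᶠ t in 𝓝[>] (0:ℝ), 0 ≤ ((φ ∘ η) t).im := by
      filter_upwards [Ioo_mem_nhdsGT_of_mem
        (Set.mem_Ico.2 ⟨le_refl (0:ℝ), hm⟩)] with t ht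
      exact hkey t (ne_of_gt ht.1) (by rw [abs_of_pos ht.1]; exact ht.2)
    have hev3 : ∀ᶠ t in 𝓝[<] (0:ℝ), 0 ≤ ((φ ∘ η) t).im := by
      filter_upwards [Ioo_mem_nhdsLT_of_mem
        (Set.mem_Ioc.2 ⟨by linarith, le_refl (0:ℝ)⟩ :
          (0:ℝ) ∈ Set.Ioc (0 - min (δ/2) 1) 0)] with t ht
      exact hkey t (ne_of_lt ht.2) (by rw [abs_of_neg ht.2]; linarith [ht.1])
    have him1 : 0 ≤ c.im :=
      aux_right (φ ∘ η) c hgη (by simp [Function.comp, hη0, h0]) hev2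
    have him2 : c.im ≤ 0 :=
      aux_left (φ ∘ η) c hgη (by simp [Function.comp, hη0, h0]) hev3
    exact ⟨le_antisymm him2 him1, hre⟩
  · -- boundary values part
    refine ⟨δ/2, by linarith, fun x hx => ?_⟩
    set x' : Fin d → ℂ := fun j => ((x j : ℂ)) with hx'
    have hx'norm : ‖x'‖ < δ/2 := by
      rw [pi_norm_lt_iff (by linarith : (0:ℝ) < δ/2)]
      intro k; simpa [hx'] using hx k
    have hcx : ContinuousAt φ x' := by
      refine (hana x' ?_).continuousAt
      simp only [dist_zero_right]
      exact lt_of_lt_of_le (lt_of_lt_of_le hx'norm (by linarith)) hδr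
    set G : ℝ → (Fin d → ℂ) := fun t => fun j => ((x j : ℂ)) + I * t with hG
    have hGcont : Continuous G := by
      apply continuous_pi
      intro k
      exact continuous_const.add (continuous_const.mul Complex.continuous_ofReal)
    have hG0 : G 0 = x' := by funext k; simp [hG, hx']
    have hφG0 : ContinuousAt φ (G 0) := by rw [hG0]; exact hcx
    have htend : Tendsto (fun t => (φ (G t)).im) (𝓝[>] (0:ℝ)) (𝓝 ((φ x').im)) := by
      have hcomp : Tendsto (φ ∘ G) (𝓝 (0:ℝ)) (𝓝 (φ x')) := by
        have := hφG0.comp hGcont.continuousAt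
        simpa [Function.comp, hG0] using this.tendsto
      exact (Complex.continuous_im.continuousAt.tendsto.comp
        (hcomp.mono_left nhdsWithin_le_nhds))
    refine ge_of_tendsto htend ?_
    filter_upwards [Ioo_mem_nhdsGT_of_mem
      (Set.mem_Ico.2 ⟨le_refl (0:ℝ), by linarith⟩ : (0:ℝ) ∈ Set.Ico 0 (δ/2))] with t ht
    obtain ⟨ht0, htδ⟩ := ht
    refine hpos (G t) (fun k => by simp [hG, ht0]) ?_
    rw [pi_norm_lt_iff hδ]
    intro k
    have h1 : ‖G t k‖ ≤ |x k| + |t| := by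
      simp only [hG]
      refine (norm_add_le _ _).trans ?_
      simp
    have := hx k
    rw [abs_of_pos ht0] at h1
    linarith
end

section
/- Let φ be analytic near 0 in ℂ^d with φ(0) = 0 and Im φ(x) ≥ 0 for all real x near 0. Write φ = Σ_j φ_j as a sum of homogeneous polynomials of degree j. If M is the smallest index such that φ_M does not have all real coefficients, then M is even and Im φ_M is a nonnegative function on ℝ^d. -/
set_option maxHeartbeats 1000000

open Complex MvPolynomial

private lemma eval_scale {d n : ℕ} {q : MvPolynomial (Fin d) ℂ} (hq : q.IsHomogeneous n)
    (c : ℂ) (x : Fin d → ℂ) :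
    eval (fun i => c * x i) q = c ^ n * eval x q := by
  rw [eval_eq', eval_eq', Finset.mul_sum]
  refine Finset.sum_congr rfl fun m hm => ?_
  have hdeg : m.degree = n := by
    by_contra h
    exact MvPolynomial.mem_support_iff.mp hm (hq.coeff_eq_zero h)
  have hsum : ∑ i : Fin d, m i = n := by
    rw [← hdeg, Finsupp.degree]
    exact (Finset.sum_subset (Finset.subset_univ _)
      (fun i _ hi => Finsupp.notMem_support_iff.mp hi)).symm
  calc coeff m q * ∏ i, (c * x i) ^ m i
      = coeff m q * ((∏ i, c ^ m i) * ∏ i, x i ^ m i) := by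
        rw [← Finset.prod_mul_distrib]
        simp_rw [mul_pow]
    _ = c ^ n * (coeff m q * ∏ i, x i ^ m i) := by
        rw [Finset.prod_pow_eq_pow_sum, hsum]; ring

private lemma eval_im' {d : ℕ} (q : MvPolynomial (Fin d) ℂ) (x : Fin d → ℝ) :
    (eval (fun i => (x i : ℂ)) q).im
      = ∑ m ∈ q.support, ((q.coeff m).im * ∏ i, x i ^ m i) := by
  rw [eval_eq', Complex.im_sum]
  refine Finset.sum_congr rfl fun m _ => ?_
  have h1 : (∏ i, ((x i : ℂ)) ^ m i) = ((∏ i, x i ^ m i : ℝ) : ℂ) := by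
    push_cast; rfl
  simp only [h1, Complex.mul_im, Complex.ofReal_im, Complex.ofReal_re, mul_zero, zero_mul,
    zero_add, add_zero]

private lemma key_lemma {a : ℕ → ℝ} {M : ℕ} (ha0 : ∀ j < M, a j = 0)
    (h : ∀ t : ℝ, |t| ≤ 1 → ∃ s, 0 ≤ s ∧ HasSum (fun j => a j * t ^ j) s) :
    0 ≤ a M ∧ (Odd M → a M = 0) := by
  obtain ⟨s1, _, hs1⟩ := h 1 (by norm_num)
  have hsum : Summable a := by simpa using hs1.summable
  obtain ⟨C, hC⟩ : ∃ C : ℝ, ∀ j, |a j| ≤ C := by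
    have h0 : Filter.Tendsto (fun j => |a j|) Filter.atTop (nhds 0) := by
      simpa using hsum.tendsto_atTop_zero.abs
    obtain ⟨C, hC⟩ := h0.bddAbove_range
    exact ⟨C, fun j => hC ⟨j, rfl⟩⟩
  have hC0 : 0 ≤ C := le_trans (abs_nonneg _) (hC 0)
  have main : ∀ t : ℝ, |t| ≤ 1/2 → -(2*C*|t|^(M+1)) ≤ a M * t ^ M := by
    intro t ht
    obtain ⟨s, hs0, hs⟩ := h t (by linarith [abs_nonneg t])
    have hfront : ∑ i ∈ Finset.range (M+1), a i * t ^ i = a M * t ^ M := by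
      rw [Finset.sum_eq_single M]
      · intro b hb hbM
        have hbM' : b < M := by
          have := Finset.mem_range.mp hb; omega
        rw [ha0 b hbM', zero_mul]
      · intro hM'
        exact absurd (Finset.self_mem_range_succ M) hM'
    have htail : HasSum (fun n => a (n+(M+1)) * t ^ (n+(M+1))) (s - a M * t ^ M) := by
      rw [← hfront]
      exact (hasSum_nat_add_iff' (M+1)).mpr hs
    have hb : ∀ n, |a (n+(M+1)) * t ^ (n+(M+1))| ≤ (C * |t|^(M+1)) * (1/2) ^ n := by
      intro n
      rw [abs_mul, _root_.abs_pow]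
      have h1 : |a (n+(M+1))| * |t| ^ (n+(M+1)) ≤ C * |t| ^ (n+(M+1)) :=
        mul_le_mul_of_nonneg_right (hC _) (pow_nonneg (abs_nonneg t) _)
      have h2 : |t| ^ (n+(M+1)) = |t| ^ (M+1) * |t| ^ n := by
        rw [← pow_add]; ring_nf
      have h3 : |t| ^ n ≤ (1/2) ^ n := pow_le_pow_left₀ (abs_nonneg t) ht n
      calc |a (n+(M+1))| * |t| ^ (n+(M+1)) ≤ C * |t| ^ (n+(M+1)) := h1
        _ = (C * |t| ^ (M+1)) * |t| ^ n := by rw [h2]; ring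
        _ ≤ (C * |t| ^ (M+1)) * (1/2) ^ n := by
            apply mul_le_mul_of_nonneg_left h3
            positivity
    have hgeo : HasSum (fun n : ℕ => (C * |t|^(M+1)) * (1/2) ^ n) ((C * |t|^(M+1)) * 2) := by
      have hg := (hasSum_geometric_of_lt_one (by norm_num : (0:ℝ) ≤ 1/2)
        (by norm_num)).mul_left (C * |t|^(M+1))
      have h12 : (1 - (1/2:ℝ))⁻¹ = 2 := by norm_num
      rw [h12] at hg
      exact hg
    have hsummable_norm : Summable (fun n => |a (n+(M+1)) * t ^ (n+(M+1))|) :=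
      Summable.of_nonneg_of_le (fun n => abs_nonneg _) hb hgeo.summable
    have habs : |s - a M * t ^ M| ≤ (C * |t|^(M+1)) * 2 := by
      have h5 : s - a M * t ^ M = ∑' n, a (n+(M+1)) * t ^ (n+(M+1)) := htail.tsum_eq.symm
      have hsn : Summable (fun n => ‖a (n+(M+1)) * t ^ (n+(M+1))‖) := by
        simpa only [Real.norm_eq_abs] using hsummable_norm
      have h6 := norm_tsum_le_tsum_norm hsn
      have h7 : ∑' n, ‖a (n+(M+1)) * t ^ (n+(M+1))‖ ≤ (C * |t|^(M+1)) * 2 := by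
        have h8 : ∑' n, ‖a (n+(M+1)) * t ^ (n+(M+1))‖
            = ∑' n, |a (n+(M+1)) * t ^ (n+(M+1))| := by
          simp only [Real.norm_eq_abs]
        rw [h8, ← hgeo.tsum_eq]
        exact Summable.tsum_le_tsum hb hsummable_norm hgeo.summable
      rw [h5, ← Real.norm_eq_abs]
      exact h6.trans h7
    have := abs_le.mp habs
    linarith [this.2, hs0]
  have part1 : 0 ≤ a M := by
    by_contra hneg
    push_neg at hneg
    set t := min (1/2 : ℝ) (-(a M)/(2*C+1)) with htdef
    have ht0 : 0 < t := lt_min (by norm_num) (div_pos (neg_pos.mpr hneg) (by linarith))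
    have habs : |t| = t := abs_of_pos ht0
    have hm := main t (by rw [habs]; exact min_le_left _ _)
    rw [habs] at hm
    have hpow : 0 < t ^ M := pow_pos ht0 M
    have h2 : (-(2*C)*t) * t ^ M ≤ a M * t ^ M := by
      have : -(2*C*t^(M+1)) = (-(2*C)*t) * t ^ M := by rw [pow_succ]; ring
      linarith [hm, this.ge.trans hm]
    have h1 : -(2*C)*t ≤ a M := (mul_le_mul_iff_of_pos_right hpow).mp h2
    have ht' : t * (2*C+1) ≤ -(a M) :=
      (le_div_iff₀ (by linarith : (0:ℝ) < 2*C+1)).mp (min_le_right _ _)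
    linarith
  refine ⟨part1, fun hodd => ?_⟩
  by_contra hne
  have hpos' : 0 < a M := lt_of_le_of_ne part1 (Ne.symm hne)
  set u := min (1/2 : ℝ) ((a M)/(2*C+1)) with hudef
  have hu0 : 0 < u := lt_min (by norm_num) (div_pos hpos' (by linarith))
  have habs : |(-u)| = u := by rw [abs_neg, abs_of_pos hu0]
  have hm := main (-u) (by rw [habs]; exact min_le_left _ _)
  rw [habs, hodd.neg_pow] at hm
  have hpow : 0 < u ^ M := pow_pos hu0 M
  have h2 : a M * u ^ M ≤ ((2*C)*u) * u ^ M := by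
    have he : -(2*C*u^(M+1)) = -(((2*C)*u) * u ^ M) := by rw [pow_succ]; ring
    rw [he] at hm
    linarith
  have h1 : a M ≤ (2*C)*u := (mul_le_mul_iff_of_pos_right hpow).mp h2
  have hu' : u * (2*C+1) ≤ a M :=
    (le_div_iff₀ (by linarith : (0:ℝ) < 2*C+1)).mp (min_le_right _ _)
  linarith

/-- Homogeneous expansion: if `φ = Σ_j φ_j` (homogeneous of degree `j`) is
analytic near `0`, `φ 0 = 0`, `Im φ ≥ 0` on `ℝ^d` near `0`, and `M` is the
smallest index such that `φ_M` has a non-real coefficient, then `M` is even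
and `Im φ_M ≥ 0` on `ℝ^d`. -/
theorem stmt_2 (d : ℕ) (p : ℕ → MvPolynomial (Fin d) ℂ)
    (hhom : ∀ j, (p j).IsHomogeneous j)
    (p0 : p 0 = 0)
    (φ : (Fin d → ℂ) → ℂ)
    (hconv : ∃ ε > 0, ∀ x : Fin d → ℂ, (∀ j, ‖x j‖ < ε) →
      HasSum (fun j : ℕ => eval x (p j)) (φ x))
    (hpos : ∃ ε > 0, ∀ x : Fin d → ℝ, (∀ j, |x j| < ε) →
      0 ≤ (φ (fun j => (x j : ℂ))).im)
    (M : ℕ)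
    (hM : ∃ m, ((p M).coeff m).im ≠ 0)
    (hMmin : ∀ j < M, ∀ m, ((p j).coeff m).im = 0) :
    Even M ∧ ∀ x : Fin d → ℝ, 0 ≤ (eval (fun j => (x j : ℂ)) (p M)).im := by
  obtain ⟨ε₁, hε₁, hconv⟩ := hconv
  obtain ⟨ε₂, hε₂, hpos⟩ := hpos
  set ε := min ε₁ ε₂ with hε
  have hε0 : 0 < ε := lt_min hε₁ hε₂
  have core : ∀ x : Fin d → ℝ, (∀ j, |x j| < ε) →
      0 ≤ (eval (fun j => (x j : ℂ)) (p M)).im ∧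
      (Odd M → (eval (fun j => (x j : ℂ)) (p M)).im = 0) := by
    intro x hx
    set a : ℕ → ℝ := fun j => (eval (fun i => (x i : ℂ)) (p j)).im with ha
    have ha0 : ∀ j < M, a j = 0 := by
      intro j hj
      rw [ha]
      simp only
      rw [eval_im']
      apply Finset.sum_eq_zero
      intro m _
      rw [hMmin j hj m, zero_mul]
    have hsum : ∀ t : ℝ, |t| ≤ 1 → ∃ s, 0 ≤ s ∧ HasSum (fun j => a j * t ^ j) s := by
      intro t ht
      have hx' : ∀ j, |t * x j| < ε := by
        intro j
        calc |t * x j| = |t| * |x j| := abs_mul _ _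
          _ ≤ 1 * |x j| := mul_le_mul_of_nonneg_right ht (abs_nonneg _)
          _ = |x j| := one_mul _
          _ < ε := hx j
      have hcv := hconv (fun i => ((t * x i : ℝ) : ℂ)) (fun j => by
        rw [Complex.norm_real]
        exact lt_of_lt_of_le (hx' j) (min_le_left _ _))
      have hps := hpos (fun i => t * x i) (fun j => lt_of_lt_of_le (hx' j) (min_le_right _ _))
      have heval : ∀ j, eval (fun i => ((t * x i : ℝ) : ℂ)) (p j)
          = (t : ℂ)^j * eval (fun i => (x i : ℂ)) (p j) := by
        intro j
        have h1 := eval_scale (hhom j) (t : ℂ) (fun i => (x i : ℂ))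
        have h2 : (fun i => ((t * x i : ℝ) : ℂ)) = (fun i => (t : ℂ) * (x i : ℂ)) := by
          funext i; push_cast; ring
        rw [h2, h1]
      refine ⟨(φ (fun i => ((t * x i : ℝ) : ℂ))).im, hps, ?_⟩
      have h2 := Complex.hasSum_im hcv
      have h3 : ∀ j, (eval (fun i => ((t * x i : ℝ) : ℂ)) (p j)).im = a j * t ^ j := by
        intro j
        rw [heval j, show ((t:ℂ)^j) = ((t^j : ℝ) : ℂ) from by push_cast; rfl, Complex.mul_im]
        simp only [Complex.ofReal_re, Complex.ofReal_im, zero_mul, add_zero, ha]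
        ring
      have h4 : (fun j : ℕ => ((eval (fun i => ((t * x i : ℝ) : ℂ))) (p j)).im)
          = fun j => a j * t ^ j := funext h3
      rw [← h4]
      exact h2
    exact key_lemma ha0 hsum
  have all : ∀ x : Fin d → ℝ,
      0 ≤ (eval (fun j => (x j : ℂ)) (p M)).im ∧
      (Odd M → (eval (fun j => (x j : ℂ)) (p M)).im = 0) := by
    intro x
    set c : ℝ := ε / (2 * (‖x‖ + 1)) with hcdef
    have hc0 : 0 < c := div_pos hε0 (by positivity)
    have hsmall : ∀ j, |c * x j| < ε := by
      intro j
      have h1 : |x j| ≤ ‖x‖ := by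
        simpa [Real.norm_eq_abs] using norm_le_pi_norm x j
      calc |c * x j| = c * |x j| := by rw [abs_mul, abs_of_pos hc0]
        _ ≤ c * ‖x‖ := mul_le_mul_of_nonneg_left h1 hc0.le
        _ < ε := by
            rw [hcdef, div_mul_eq_mul_div, div_lt_iff₀ (by positivity)]
            nlinarith [norm_nonneg x, hε0]
    obtain ⟨h1, h2⟩ := core (fun j => c * x j) hsmall
    have heval : eval (fun i => ((c * x i : ℝ) : ℂ)) (p M)
        = (c : ℂ)^M * eval (fun i => (x i : ℂ)) (p M) := by
      have ha := eval_scale (hhom M) (c : ℂ) (fun i => (x i : ℂ))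
      have hb : (fun i => ((c * x i : ℝ) : ℂ)) = (fun i => (c : ℂ) * (x i : ℂ)) := by
        funext i; push_cast; ring
      rw [hb, ha]
    rw [heval, ← Complex.ofReal_pow, Complex.mul_im] at h1 h2
    simp only [Complex.ofReal_re, Complex.ofReal_im, zero_mul, add_zero] at h1 h2
    have hpow : 0 < c ^ M := pow_pos hc0 M
    constructor
    · nlinarith [h1]
    · intro hodd
      have h3 := h2 hodd
      rcases mul_eq_zero.mp h3 with h4 | h4
      · exact absurd h4 (ne_of_gt hpow)
      · exact h4
  refine ⟨?_, fun x => (all x).1⟩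
  rcases Nat.even_or_odd M with he | ho
  · exact he
  · exfalso
    obtain ⟨m, hm⟩ := hM
    set q : MvPolynomial (Fin d) ℝ :=
      ∑ m ∈ (p M).support, monomial m (((p M).coeff m).im) with hqdef
    have hqx : ∀ x : Fin d → ℝ, eval x q = (eval (fun i => (x i : ℂ)) (p M)).im := by
      intro x
      rw [eval_im', hqdef, map_sum]
      refine Finset.sum_congr rfl fun m' _ => ?_
      rw [eval_monomial]
      rw [Finsupp.prod_pow]
    have hmsup : m ∈ (p M).support := by
      rw [MvPolynomial.mem_support_iff]
      intro h0
      rw [h0] at hm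
      simp at hm
    have hqm : coeff m q = ((p M).coeff m).im := by
      rw [hqdef, MvPolynomial.coeff_sum]
      rw [Finset.sum_eq_single m]
      · rw [coeff_monomial]; simp
      · intro b _ hbm
        rw [coeff_monomial, if_neg hbm]
      · intro h; exact absurd hmsup h
    have hq0 : q = 0 := by
      apply MvPolynomial.funext
      intro x
      rw [hqx x, (all x).2 ho]
      simp
    rw [hq0] at hqm
    simp at hqm
    exact hm hqm.symm
end

section
/- Let φ be analytic near 0 in ℂ^d with φ(0) = 0, mapping small points of ℍ^d into the closed upper half-plane. If ∇φ(0) = 0 then φ is identically zero. -/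
open Complex

lemma theta_exists (n : ℕ) (hn : 2 ≤ n) (α : ℝ) (hα₁ : -Real.pi < α) (hα₂ : α ≤ Real.pi) :
    ∃ s : ℝ, 0 < s ∧ s < n * Real.pi ∧ Real.sin (s + α) < 0 := by
  have hπ := Real.pi_pos
  have hn2 : (2:ℝ) ≤ (n:ℝ) := by exact_mod_cast hn
  by_cases h : α ≤ -(Real.pi/2)
  · refine ⟨Real.pi/4, by linarith, by nlinarith, ?_⟩
    apply Real.sin_neg_of_neg_of_neg_pi_lt <;> linarith
  · refine ⟨3*Real.pi/2 - α, by linarith, by nlinarith, ?_⟩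
    have h1 : 3*Real.pi/2 - α + α = Real.pi/2 + Real.pi := by ring
    rw [h1, Real.sin_add_pi, Real.sin_pi_div_two]
    norm_num

lemma oneVar (g : ℂ → ℂ) (hg : AnalyticAt ℂ g 0) (h0 : g 0 = 0)
    (hd : deriv g 0 = 0) (ε : ℝ) (hε : 0 < ε)
    (hmap : ∀ z : ℂ, 0 < z.im → ‖z‖ < ε → 0 ≤ (g z).im) :
    ∀ᶠ z in nhds (0:ℂ), g z = 0 := by
  by_contra hne
  obtain ⟨n, h, hh, hh0, heq⟩ := hg.exists_eventuallyEq_pow_smul_nonzero_iff.mpr hne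
  simp only [sub_zero, smul_eq_mul] at heq
  have hn0 : n ≠ 0 := by
    intro hn
    have := heq.self_of_nhds
    rw [hn, pow_zero, one_mul, h0] at this
    exact hh0 this.symm
  have hn1 : n ≠ 1 := by
    intro hn
    subst hn
    have heq1 : g =ᶠ[nhds (0:ℂ)] fun z => z * h z := by
      filter_upwards [heq] with z hz using by simpa using hz
    have : deriv g 0 = deriv (fun z : ℂ => z * h z) 0 := heq1.deriv_eq
    rw [deriv_fun_mul differentiableAt_fun_id hh.differentiableAt] at this
    simp [hd] at this
    exact hh0 this.symm
  have hn2 : 2 ≤ n := by omega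
  set a := h 0 with ha
  obtain ⟨s, hs0, hsn, hsin⟩ := theta_exists n hn2 a.arg (Complex.neg_pi_lt_arg a) (Complex.arg_le_pi a)
  set θ : ℝ := s / n with hθ
  have hnR : (0:ℝ) < n := by positivity
  have hθ0 : 0 < θ := div_pos hs0 hnR
  have hθπ : θ < Real.pi := by
    rw [hθ, div_lt_iff₀ hnR]
    linarith [hsn]
  have hnθ : (n:ℝ) * θ = s := by rw [hθ]; field_simp
  set F : ℂ → ℝ := fun z => (Complex.exp (↑s * I) * h z).im with hF
  have hF0 : F 0 < 0 := by
    have key : Complex.exp (↑s * I) * a = ↑‖a‖ * Complex.exp (↑(s + a.arg) * I) := by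
      conv_lhs => rw [← Complex.norm_mul_exp_arg_mul_I a]
      rw [Complex.ofReal_add, add_mul, Complex.exp_add]
      ring
    have : F 0 = ‖a‖ * Real.sin (s + a.arg) := by
      rw [hF]
      simp only [← ha, key, Complex.mul_im, Complex.ofReal_re, Complex.ofReal_im,
        Complex.exp_ofReal_mul_I_im, Complex.exp_ofReal_mul_I_re]
      ring
    rw [this]
    exact mul_neg_of_pos_of_neg (norm_pos_iff.mpr hh0) hsin
  -- continuity of F at 0
  have hFc : ContinuousAt F 0 :=
    Complex.continuous_im.continuousAt.comp (continuousAt_const.mul hh.continuousAt)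
  have hFneg : ∀ᶠ z in nhds (0:ℂ), F z < 0 := hFc.eventually (gt_mem_nhds hF0)
  obtain ⟨δ, hδ0, hδ⟩ := Metric.eventually_nhds_iff.mp (heq.and hFneg)
  set t : ℝ := min δ ε / 2 with ht
  have ht0 : 0 < t := by positivity
  have htδ : t < δ := by
    have h1 := min_le_left δ ε; simp only [ht]; linarith
  have htε : t < ε := by
    have h1 := min_le_right δ ε; simp only [ht]; linarith
  set z : ℂ := ↑t * Complex.exp (↑θ * I) with hz
  have hznorm : ‖z‖ = t := by
    rw [hz, norm_mul, Complex.norm_real, Real.norm_eq_abs, Complex.norm_exp_ofReal_mul_I,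
      mul_one, abs_of_pos ht0]
  have hzim : 0 < z.im := by
    rw [hz, Complex.mul_im]
    simp only [Complex.ofReal_re, Complex.ofReal_im, Complex.exp_ofReal_mul_I_im, zero_mul,
      add_zero]
    exact mul_pos ht0 (Real.sin_pos_of_pos_of_lt_pi hθ0 hθπ)
  have hzd : dist z 0 < δ := by
    rw [dist_zero_right, hznorm]; exact htδ
  obtain ⟨hgz, hFz⟩ := hδ hzd
  have hzn : z ^ n = ↑(t ^ n) * Complex.exp (↑s * I) := by
    rw [hz, mul_pow, ← Complex.exp_nat_mul, Complex.ofReal_pow]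
    congr 2
    push_cast [← hnθ]
    ring
  have him : (g z).im = t ^ n * F z := by
    rw [hgz, hzn, mul_assoc, Complex.mul_im]
    simp only [Complex.ofReal_re, Complex.ofReal_im, zero_mul, add_zero, hF]
  have hneg : (g z).im < 0 := by
    rw [him]
    exact mul_neg_of_pos_of_neg (by positivity) hFz
  exact absurd (hmap z hzim (by rw [hznorm]; exact htε)) (not_le.mpr hneg)

/-- If `φ` is analytic at `0 ∈ ℂ^d`, `φ 0 = 0`, `φ` maps small points of `ℍ^d`
into the closed upper half-plane, and `∇φ(0) = 0`, then `φ` vanishes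
identically near `0`. -/
theorem stmt_3 (d : ℕ) (φ : (Fin d → ℂ) → ℂ) (hφ : AnalyticAt ℂ φ 0)
    (h0 : φ 0 = 0)
    (hmap : ∃ ε > 0, ∀ x : Fin d → ℂ,
      (∀ j, 0 < (x j).im) → (∀ j, ‖x j‖ < ε) → 0 ≤ (φ x).im)
    (hgrad : fderiv ℂ φ 0 = 0) :
    ∀ᶠ x in nhds (0 : Fin d → ℂ), φ x = 0 := by
  obtain ⟨ε, hε, hmap⟩ := hmap
  obtain ⟨ρ, hρ0, hρ⟩ : ∃ ρ > 0, ∀ y ∈ Metric.ball (0 : Fin d → ℂ) ρ, AnalyticAt ℂ φ y := by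
    have h1 := hφ.eventually_analyticAt
    rw [Metric.eventually_nhds_iff_ball] at h1
    exact h1
  set δ : ℝ := min ε ρ / 2 with hδdef
  have hδ0 : 0 < δ := by positivity
  have hδε : 2 * δ ≤ ε := by
    have := min_le_left ε ρ; simp only [hδdef]; linarith
  have hδρ : 2 * δ ≤ ρ := by
    have := min_le_right ε ρ; simp only [hδdef]; linarith
  -- Step B: φ vanishes at real positive vectors in (0, δ)^d
  have hreal : ∀ r : Fin d → ℝ, (∀ j, 0 < r j) → (∀ j, r j < δ) →
      φ (fun j => (r j : ℂ)) = 0 := by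
    intro r hr0 hrδ
    set v : Fin d → ℂ := fun j => (r j : ℂ) with hv
    set L : ℂ →L[ℂ] (Fin d → ℂ) := (1 : ℂ →L[ℂ] ℂ).smulRight v with hLdef
    have hL : ∀ s : ℂ, L s = fun j => s * (r j : ℂ) := by
      intro s; funext j
      simp [hLdef, hv]
    have hmem : ∀ s : ℂ, ‖s‖ < 2 → L s ∈ Metric.ball (0 : Fin d → ℂ) ρ := by
      intro s hs
      rw [mem_ball_zero_iff, pi_norm_lt_iff hρ0]
      intro j
      rw [hL]
      have : ‖s * (r j : ℂ)‖ = ‖s‖ * r j := by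
        rw [norm_mul, Complex.norm_real, Real.norm_eq_abs, abs_of_pos (hr0 j)]
      rw [this]
      calc ‖s‖ * r j < 2 * δ :=
            mul_lt_mul'' hs (hrδ j) (norm_nonneg s) (le_of_lt (hr0 j))
        _ ≤ ρ := hδρ
    set g : ℂ → ℂ := fun s => φ (L s) with hgdef
    have hgan : ∀ s : ℂ, ‖s‖ < 2 → AnalyticAt ℂ g s := fun s hs =>
      (hρ (L s) (hmem s hs)).comp (L.analyticAt s)
    have hg0 : g 0 = 0 := by simp [hgdef, map_zero L, h0]
    have hgd : deriv g 0 = 0 := by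
      have hL0 : L 0 = 0 := map_zero L
      have hφd : DifferentiableAt ℂ φ (L 0) := by
        rw [hL0]; exact hφ.differentiableAt
      have h1 : fderiv ℂ (φ ∘ ⇑L) 0 = (fderiv ℂ φ (L 0)).comp (fderiv ℂ ⇑L 0) :=
        fderiv_comp 0 hφd L.differentiableAt
      rw [hL0, hgrad, ContinuousLinearMap.zero_comp] at h1
      have h2 : deriv g 0 = (fderiv ℂ (φ ∘ ⇑L) 0) 1 := (fderiv_apply_one_eq_deriv).symm
      rw [h2, h1]
      rfl
    have hgmap : ∀ s : ℂ, 0 < s.im → ‖s‖ < 1 → 0 ≤ (g s).im := by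
      intro s him hs
      apply hmap (L s)
      · intro j
        rw [hL]
        simp only [Complex.mul_im, Complex.ofReal_re, Complex.ofReal_im, mul_zero, zero_add,
          zero_mul, add_zero]
        exact mul_pos him (hr0 j)
      · intro j
        rw [hL]
        have : ‖s * (r j : ℂ)‖ = ‖s‖ * r j := by
          rw [norm_mul, Complex.norm_real, Real.norm_eq_abs, abs_of_pos (hr0 j)]
        rw [this]
        calc ‖s‖ * r j < 1 * δ :=
              mul_lt_mul'' hs (hrδ j) (norm_nonneg s) (le_of_lt (hr0 j))
          _ ≤ ε := by linarith
    have hev : ∀ᶠ z in nhds (0:ℂ), g z = 0 :=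
      oneVar g (hgan 0 (by norm_num)) hg0 hgd 1 one_pos hgmap
    have hEq : Set.EqOn g 0 (Metric.ball (0:ℂ) 2) := by
      apply AnalyticOnNhd.eqOn_zero_of_preconnected_of_eventuallyEq_zero
        (fun s hs => hgan s (mem_ball_zero_iff.mp hs))
        (convex_ball (0:ℂ) 2).isPreconnected (Metric.mem_ball_self (by norm_num))
      exact hev
    have h1 : g 1 = 0 := hEq (by norm_num [Metric.mem_ball])
    rw [hgdef] at h1
    simp only [hL 1, one_mul] at h1
    exact h1
  -- Step C: coordinate-by-coordinate complexification
  set c : ℝ := δ / 2 with hc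
  have hstep : ∀ k : ℕ, ∀ x : Fin d → ℂ, (∀ j, ‖x j - (c:ℂ)‖ < δ/4) →
      (∀ j : Fin d, k ≤ (j:ℕ) → (x j).im = 0) → φ x = 0 := by
    intro k
    induction k with
    | zero =>
      intro x hx him
      have hxr : x = fun j => (((x j).re : ℝ) : ℂ) := by
        funext j
        apply Complex.ext <;> simp [him j (Nat.zero_le _)]
      rw [hxr]
      apply hreal
      · intro j
        have h1 : |(x j).re - c| ≤ ‖x j - (c:ℂ)‖ := by
          have := Complex.abs_re_le_norm (x j - (c:ℂ))
          simpa using this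
        have := hx j
        simp only [hc] at *
        cases abs_lt.mp (lt_of_le_of_lt h1 (hx j)) with
        | intro hl hr => linarith
      · intro j
        have h1 : |(x j).re - c| ≤ ‖x j - (c:ℂ)‖ := by
          have := Complex.abs_re_le_norm (x j - (c:ℂ))
          simpa using this
        cases abs_lt.mp (lt_of_le_of_lt h1 (hx j)) with
        | intro hl hr => simp only [hc] at hr ⊢; linarith
    | succ k ih =>
      intro x hx him
      by_cases hk : k < d
      · set j₀ : Fin d := ⟨k, hk⟩ with hj₀
        set e : Fin d → ℂ := Pi.single j₀ 1 with he
        set b : Fin d → ℂ := Function.update x j₀ 0 with hb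
        set M : ℂ →L[ℂ] (Fin d → ℂ) := (1 : ℂ →L[ℂ] ℂ).smulRight e with hM
        set A : ℂ → (Fin d → ℂ) := fun w => b + M w with hA
        have hAup : ∀ w, A w = Function.update x j₀ w := by
          intro w; funext i
          by_cases hi : i = j₀
          · subst hi
            simp [hA, hb, hM, he]
          · simp [hA, hb, hM, he, Function.update_apply, hi, Pi.single_apply]
        set f : ℂ → ℂ := fun w => φ (A w) with hf
        have hballρ : ∀ w : ℂ, ‖w - (c:ℂ)‖ < δ/4 → A w ∈ Metric.ball (0 : Fin d → ℂ) ρ := by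
          intro w hw
          rw [mem_ball_zero_iff, pi_norm_lt_iff hρ0]
          intro i
          rw [hAup w, Function.update_apply]
          have hcn : ‖((c:ℝ) : ℂ)‖ = c := by
            rw [Complex.norm_real, Real.norm_eq_abs, abs_of_pos (by simp [hc]; linarith)]
          by_cases hi : i = j₀
          · rw [if_pos hi]
            have h2 := norm_add_le (w - (c:ℂ)) ((c:ℂ))
            rw [sub_add_cancel] at h2
            rw [hcn] at h2
            simp only [hc] at *
            linarith
          · rw [if_neg hi]
            have h2 := norm_add_le (x i - (c:ℂ)) ((c:ℂ))
            rw [sub_add_cancel] at h2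
            rw [hcn] at h2
            have := hx i
            simp only [hc] at *
            linarith
        have hfan : ∀ w ∈ Metric.ball ((c:ℝ):ℂ) (δ/4), AnalyticAt ℂ f w := by
          intro w hw
          rw [Metric.mem_ball, dist_eq_norm] at hw
          have hφA : AnalyticAt ℂ φ (A w) := hρ (A w) (hballρ w hw)
          have hAan : AnalyticAt ℂ A w := by
            rw [hA]
            exact analyticAt_const.add (M.analyticAt w)
          exact hφA.comp hAan
        have hfreal : ∀ t : ℝ, |t - c| < δ/4 → f t = 0 := by
          intro t ht
          apply ih (A t)
          · intro j
            rw [hAup, Function.update_apply]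
            by_cases hj : j = j₀
            · rw [if_pos hj, ← Complex.ofReal_sub, Complex.norm_real, Real.norm_eq_abs]
              exact ht
            · rw [if_neg hj]
              exact hx j
          · intro j hj
            rw [hAup, Function.update_apply]
            by_cases hj' : j = j₀
            · rw [if_pos hj']
              simp
            · rw [if_neg hj']
              apply him
              have : (j : ℕ) ≠ k := fun hh => hj' (Fin.ext hh)
              omega
        have hfz : Set.EqOn f 0 (Metric.ball ((c:ℝ):ℂ) (δ/4)) := by
          apply AnalyticOnNhd.eqOn_zero_of_preconnected_of_frequently_eq_zero hfan
            (convex_ball _ _).isPreconnected (Metric.mem_ball_self (by linarith))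
          have h1 : Filter.Tendsto (fun t : ℝ => (t:ℂ)) (nhdsWithin c ({c}ᶜ : Set ℝ))
              (nhdsWithin ((c:ℝ):ℂ) ({((c:ℝ):ℂ)}ᶜ : Set ℂ)) := by
            apply tendsto_nhdsWithin_of_tendsto_nhds_of_eventually_within
            · exact (Complex.continuous_ofReal.tendsto _).mono_left nhdsWithin_le_nhds
            · filter_upwards [self_mem_nhdsWithin] with t ht
              simp only [Set.mem_compl_iff, Set.mem_singleton_iff] at ht ⊢
              exact fun hh => ht (Complex.ofReal_inj.mp hh)
          have h2 : ∀ᶠ t : ℝ in nhdsWithin c ({c}ᶜ : Set ℝ), f (t:ℂ) = 0 := by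
            apply Filter.Eventually.filter_mono nhdsWithin_le_nhds
            have hball : Metric.ball c (δ/4) ∈ nhds c := Metric.ball_mem_nhds _ (by linarith)
            filter_upwards [hball] with t ht
            rw [Metric.mem_ball, Real.dist_eq] at ht
            exact hfreal t ht
          exact h1.frequently h2.frequently
        have hx0 : f (x j₀) = 0 := by
          apply hfz
          rw [Metric.mem_ball, dist_eq_norm]
          exact hx j₀
        have hfin : φ x = φ (A (x j₀)) := by rw [hAup, Function.update_eq_self]
        rw [hfin]
        exact hx0
      · exact ih x hx (fun j hj => him j (by omega))
  -- conclude via the identity theorem on the ball of radius ρ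
  set cv : Fin d → ℂ := fun _ => ((c:ℝ):ℂ) with hcv
  have hcvmem : cv ∈ Metric.ball (0 : Fin d → ℂ) ρ := by
    rw [mem_ball_zero_iff, pi_norm_lt_iff hρ0]
    intro j
    rw [hcv]
    rw [Complex.norm_real, Real.norm_eq_abs, abs_of_pos (by simp only [hc]; linarith)]
    simp only [hc]; linarith
  have hnbhd : φ =ᶠ[nhds cv] 0 := by
    have hball : Metric.ball cv (δ/4) ∈ nhds cv := Metric.ball_mem_nhds _ (by linarith)
    filter_upwards [hball] with x hx
    apply hstep d x
    · intro j
      have h1 : dist (x j) (cv j) ≤ dist x cv := dist_le_pi_dist x cv j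
      rw [Metric.mem_ball] at hx
      rw [hcv] at h1
      rw [← dist_eq_norm]
      exact lt_of_le_of_lt h1 hx
    · intro j hj
      exact absurd (lt_of_lt_of_le j.isLt hj) (lt_irrefl _)
  have hEq : Set.EqOn φ 0 (Metric.ball (0 : Fin d → ℂ) ρ) :=
    AnalyticOnNhd.eqOn_zero_of_preconnected_of_eventuallyEq_zero hρ
      (convex_ball _ _).isPreconnected hcvmem hnbhd
  filter_upwards [Metric.ball_mem_nhds (0 : Fin d → ℂ) hρ0] with x hx
  exact hEq hx
end

section
/- Let φ be analytic near 0 in ℂ^d with φ(0) = 0 and Im φ(x) ≥ 0 for x ∈ ℍ^d near 0. Let T ⊆ {1,…,d} be the set of indices j for which the j-th component of ∇φ(0) is zero. Then φ restricted to the span of the coordinate vectors e_j, j ∈ T, is identically zero; that is, φ(Σ_{j∈T} x_j e_j) ≡ 0. -/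
open Complex

lemma aux_angle (c : ℂ) (hc : c ≠ 0) :
    ∃ α : ℝ, 0 < α ∧ α < 2 * Real.pi ∧ (c * Complex.exp (α * Complex.I)).im < 0 := by
  have pi_pos := Real.pi_pos
  have him : ∀ α : ℝ, (c * Complex.exp ((α : ℂ) * Complex.I)).im
      = c.re * Real.sin α + c.im * Real.cos α := by
    intro α
    rw [Complex.mul_im, Complex.exp_ofReal_mul_I_re, Complex.exp_ofReal_mul_I_im]
  rcases lt_trichotomy c.re 0 with h | h | h
  · refine ⟨Real.pi / 2, by positivity, by linarith, ?_⟩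
    rw [him, Real.sin_pi_div_two, Real.cos_pi_div_two]
    linarith
  · rcases lt_trichotomy c.im 0 with h' | h' | h'
    · refine ⟨Real.pi / 4, by positivity, by linarith, ?_⟩
      rw [him, Real.sin_pi_div_four, Real.cos_pi_div_four, h]
      have : (0:ℝ) < Real.sqrt 2 / 2 := by positivity
      nlinarith
    · exact absurd (Complex.ext h h') hc
    · refine ⟨Real.pi, pi_pos, by linarith, ?_⟩
      rw [him, Real.sin_pi, Real.cos_pi, h]
      linarith
  · refine ⟨Real.pi + Real.pi / 2, by linarith, by linarith, ?_⟩
    rw [him, Real.sin_add, Real.cos_add, Real.sin_pi, Real.cos_pi,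
      Real.sin_pi_div_two, Real.cos_pi_div_two]
    nlinarith

lemma aux_onevar (f : ℂ → ℂ) (hf : AnalyticAt ℂ f 0) (hf0 : f 0 = 0)
    (hd : deriv f 0 = 0) (him : ∀ᶠ z in nhds (0:ℂ), 0 < z.im → 0 ≤ (f z).im) :
    ∀ᶠ z in nhds (0:ℂ), f z = 0 := by
  by_contra hcon
  obtain ⟨n, g, hg, hg0, heq⟩ := hf.exists_eventuallyEq_pow_smul_nonzero_iff.mpr hcon
  have heq' : ∀ᶠ z in nhds (0:ℂ), f z = z ^ n * g z := by
    filter_upwards [heq] with z hz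
    simpa [smul_eq_mul] using hz
  have hn0 : n ≠ 0 := by
    rintro rfl
    have h1 := heq'.self_of_nhds
    simp [hf0] at h1
    exact hg0 h1.symm
  have hn1 : n ≠ 1 := by
    rintro rfl
    have hD : HasDerivAt (fun z : ℂ => z ^ 1 * g z) (g 0) 0 := by
      have h1 : HasDerivAt (fun z : ℂ => z) 1 (0:ℂ) := hasDerivAt_id 0
      have h2 := hg.differentiableAt.hasDerivAt
      have h3 := h1.mul h2
      simp only [pow_one]
      have h4 : HasDerivAt (fun z : ℂ => z * g z) (1 * g 0 + 0 * deriv g 0) 0 := h3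
      convert h4 using 1
      simp
    have hder : deriv f 0 = g 0 := by
      rw [Filter.EventuallyEq.deriv_eq heq']
      exact hD.deriv
    exact hg0 (by rw [← hder, hd])
  have hn2 : 2 ≤ n := by omega
  obtain ⟨α, hα0, hα2, hneg⟩ := aux_angle (g 0) hg0
  have hnR : (0:ℝ) < n := by positivity
  set θ : ℝ := α / n with hθ
  have hθ0 : 0 < θ := div_pos hα0 hnR
  have hθπ : θ < Real.pi := by
    rw [hθ, div_lt_iff₀ hnR]
    have h2n : (2:ℝ) ≤ n := by exact_mod_cast hn2
    nlinarith [Real.pi_pos]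
  set u : ℂ := Complex.exp ((θ : ℂ) * Complex.I) with hu
  have huim : u.im = Real.sin θ := Complex.exp_ofReal_mul_I_im θ
  have hun : u ^ n = Complex.exp ((α : ℂ) * Complex.I) := by
    rw [hu, ← Complex.exp_nat_mul]
    congr 1
    have hnc : (n:ℂ) ≠ 0 := Nat.cast_ne_zero.2 hn0
    rw [hθ, Complex.ofReal_div]
    push_cast
    field_simp
  have hsin : 0 < Real.sin θ := Real.sin_pos_of_pos_of_lt_pi hθ0 hθπ
  have hF : Filter.Tendsto (fun r : ℝ => (r : ℂ) * u) (nhdsWithin 0 (Set.Ioi 0)) (nhds 0) := by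
    have hc : Continuous fun r : ℝ => (r : ℂ) * u := by continuity
    exact (hc.tendsto' 0 0 (by simp)).mono_left nhdsWithin_le_nhds
  have hgc : Filter.Tendsto (fun r : ℝ => (g ((r:ℂ) * u) * Complex.exp ((α:ℂ)*Complex.I)).im)
      (nhdsWithin 0 (Set.Ioi 0)) (nhds ((g 0 * Complex.exp ((α:ℂ)*Complex.I)).im)) := by
    have h1 : Filter.Tendsto (fun r : ℝ => g ((r:ℂ)*u)) (nhdsWithin 0 (Set.Ioi 0)) (nhds (g 0)) :=
      hg.continuousAt.tendsto.comp hF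
    exact (Complex.continuous_im.tendsto _).comp (h1.mul_const _)
  have hev3 : ∀ᶠ r : ℝ in nhdsWithin (0:ℝ) (Set.Ioi (0:ℝ)),
      (g ((r:ℂ)*u) * Complex.exp ((α:ℂ)*Complex.I)).im < 0 :=
    Filter.Tendsto.eventually_lt_const hneg hgc
  have hev1 := hF.eventually heq'
  have hev2 := hF.eventually him
  have hr : ∀ᶠ r in nhdsWithin (0:ℝ) (Set.Ioi 0), 0 < r := self_mem_nhdsWithin
  obtain ⟨r, h1, h2, h3, h4⟩ := (hev1.and (hev2.and (hev3.and hr))).exists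
  have himz : 0 < ((r:ℂ)*u).im := by
    rw [Complex.im_ofReal_mul, huim]
    positivity
  have h5 := h2 himz
  have h6 : (f ((r:ℂ)*u)).im = r^n * (g ((r:ℂ)*u) * Complex.exp ((α:ℂ)*Complex.I)).im := by
    rw [h1, mul_pow, hun]
    rw [show ((r:ℂ))^n = ((r^n : ℝ) : ℂ) by push_cast; ring]
    rw [show ((r^n:ℝ):ℂ) * Complex.exp ((α:ℂ)*Complex.I) * g ((r:ℂ)*u)
        = ((r^n:ℝ):ℂ) * (g ((r:ℂ)*u) * Complex.exp ((α:ℂ)*Complex.I)) by ring]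
    exact Complex.im_ofReal_mul _ _
  have hrn : 0 < r ^ n := pow_pos h4 n
  nlinarith

set_option maxHeartbeats 1000000 in
set_option synthInstance.maxHeartbeats 400000 in
/-- If `φ` is analytic at `0`, `φ 0 = 0`, and `φ` maps small points of `ℍ^d`
into the closed upper half-plane, then `φ` vanishes identically on the span of
the coordinate directions in which the gradient of `φ` at `0` vanishes. -/
theorem stmt_4 (d : ℕ) (φ : (Fin d → ℂ) → ℂ) (hφ : AnalyticAt ℂ φ 0)
    (h0 : φ 0 = 0)
    (hmap : ∃ ε > 0, ∀ x : Fin d → ℂ,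
      (∀ j, 0 < (x j).im) → (∀ j, ‖x j‖ < ε) → 0 ≤ (φ x).im)
    (T : Set (Fin d))
    (hT : ∀ j, j ∈ T ↔ fderiv ℂ φ 0 (Pi.single j 1) = 0) :
    ∃ ε > 0, ∀ x : Fin d → ℂ, (∀ j, ‖x j‖ < ε) →
      φ (T.indicator x) = 0 := by
  classical
  obtain ⟨ε, hε, hmap⟩ := hmap
  obtain ⟨r₀, hr₀, hball⟩ : ∃ r > 0, ∀ y ∈ Metric.ball (0 : Fin d → ℂ) r, AnalyticAt ℂ φ y := by
    have h := hφ.eventually_analyticAt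
    rw [Metric.eventually_nhds_iff_ball] at h
    exact h
  set ρ : ℝ := min r₀ ε / 4 with hρdef
  have hρ : 0 < ρ := by positivity
  have hρr : 4 * ρ ≤ r₀ := by
    have := min_le_left r₀ ε
    rw [hρdef]; linarith
  have hρε : 4 * ρ ≤ ε := by
    have := min_le_right r₀ ε
    rw [hρdef]; linarith
  -- membership in the analyticity ball
  have hmem : ∀ y : Fin d → ℂ, ‖y‖ < 2 * ρ → AnalyticAt ℂ φ y := by
    intro y hy
    exact hball y (by rw [Metric.mem_ball, dist_zero_right]; linarith)
  -- Claim C: Im φ ≥ 0 on the closed multi-halfplane, near 0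
  have hC : ∀ x : Fin d → ℂ, (∀ j, 0 ≤ (x j).im) → ‖x‖ < 2 * ρ → 0 ≤ (φ x).im := by
    intro x himx hx
    have hcont : ContinuousAt φ x := (hmem x hx).continuousAt
    have hxj : ∀ j, ‖x j‖ < 2 * ρ := fun j => lt_of_le_of_lt (norm_le_pi_norm x j) hx
    have key : ∀ δ : ℝ, 0 < δ → δ < 2 * ρ → 0 ≤ (φ (fun j => x j + δ * Complex.I)).im := by
      intro δ hδ hδ2
      apply hmap
      · intro j
        have : (x j + (δ:ℂ) * Complex.I).im = (x j).im + δ := by simp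
        rw [this]
        have := himx j
        linarith
      · intro j
        calc ‖x j + (δ:ℂ) * Complex.I‖ ≤ ‖x j‖ + ‖(δ:ℂ) * Complex.I‖ := norm_add_le _ _
          _ = ‖x j‖ + δ := by simp [abs_of_pos hδ]
          _ < 2 * ρ + 2 * ρ := by linarith [hxj j]
          _ ≤ ε := by linarith
    have hten : Filter.Tendsto (fun δ : ℝ => (φ (fun j => x j + (δ:ℂ) * Complex.I)).im)
        (nhdsWithin 0 (Set.Ioi 0)) (nhds ((φ x).im)) := by
      have hc1 : Filter.Tendsto (fun δ : ℝ => (fun j => x j + (δ:ℂ) * Complex.I))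
          (nhdsWithin 0 (Set.Ioi 0)) (nhds x) := by
        have hc : Continuous fun δ : ℝ => (fun j => x j + (δ:ℂ) * Complex.I) := by
          apply continuous_pi
          intro j
          continuity
        exact (hc.tendsto' 0 x (by funext j; simp)).mono_left nhdsWithin_le_nhds
      exact (Complex.continuous_im.tendsto _).comp (hcont.tendsto.comp hc1)
    refine ge_of_tendsto hten ?_
    have hIoo : Set.Ioo (0:ℝ) (2*ρ) ∈ nhdsWithin (0:ℝ) (Set.Ioi 0) :=
      Ioo_mem_nhdsGT_of_mem ⟨le_refl 0, by linarith⟩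
    filter_upwards [hIoo] with δ hδ
    exact key δ hδ.1 hδ.2
  -- base case: positive real coordinates
  have base : ∀ x : Fin d → ℂ, ‖x‖ < ρ → (∀ j, ∃ t : ℝ, 0 ≤ t ∧ x j = t) →
      φ (T.indicator x) = 0 := by
    intro x hx hpos
    set v : Fin d → ℂ := T.indicator x with hv
    have hvle : ∀ j, ‖v j‖ ≤ ‖x j‖ := by
      intro j
      rw [hv, Set.indicator_apply]
      split <;> simp [norm_nonneg]
    have hvnorm : ‖v‖ ≤ ‖x‖ := by
      refine (pi_norm_le_iff_of_nonneg (norm_nonneg x)).2 fun j => ?_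
      exact le_trans (hvle j) (norm_le_pi_norm x j)
    have hvρ : ‖v‖ < ρ := lt_of_le_of_lt hvnorm hx
    -- the gradient pairing vanishes
    have hfd : fderiv ℂ φ 0 v = 0 := by
      have hvsum : v = ∑ j : Fin d, v j • (Pi.single j (1:ℂ) : Fin d → ℂ) := by
        funext j
        rw [Finset.sum_apply]
        simp only [Pi.smul_apply, Pi.single_apply, smul_eq_mul, mul_ite, mul_one, mul_zero]
        rw [Finset.sum_ite_eq]
        simp
      rw [hvsum, map_sum]
      refine Finset.sum_eq_zero fun j _ => ?_
      rw [map_smul]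
      by_cases hjT : j ∈ T
      · rw [(hT j).1 hjT, smul_zero]
      · have : v j = 0 := by rw [hv, Set.indicator_apply, if_neg hjT]
        rw [this, zero_smul]
    set g : ℂ → ℂ := fun z => φ (z • v) with hg
    have hM : ∀ z : ℂ, (ContinuousLinearMap.smulRight (1 : ℂ →L[ℂ] ℂ) v) z = z • v := by
      intro z; simp
    have hganal : ∀ z : ℂ, ‖z‖ < 2 → AnalyticAt ℂ g z := by
      intro z hz
      have h1 : AnalyticAt ℂ φ (z • v) := by
        apply hmem
        rw [norm_smul]
        calc ‖z‖ * ‖v‖ ≤ 2 * ‖v‖ := by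
              apply mul_le_mul_of_nonneg_right (le_of_lt hz) (norm_nonneg v)
          _ < 2 * ρ := by
              apply mul_lt_mul_of_pos_left hvρ (by norm_num)
      have h2 : AnalyticAt ℂ (fun z : ℂ => z • v) z :=
        ((ContinuousLinearMap.smulRight (1 : ℂ →L[ℂ] ℂ) v).analyticAt z).congr
          (by filter_upwards with w; simp)
      have h3 : AnalyticAt ℂ (φ ∘ fun z : ℂ => z • v) z := h1.comp_of_eq h2 rfl
      exact h3
    have hg0 : g 0 = 0 := by simp [hg, h0]
    have hgd : deriv g 0 = 0 := by
      have hφd : HasFDerivAt φ (fderiv ℂ φ 0) ((fun z : ℂ => z • v) 0) := by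
        simpa using (hmem 0 (by simp; positivity)).differentiableAt.hasFDerivAt
      have hMd : HasFDerivAt (fun z : ℂ => z • v)
          (ContinuousLinearMap.smulRight (1 : ℂ →L[ℂ] ℂ) v) 0 := by
        have := (ContinuousLinearMap.smulRight (1 : ℂ →L[ℂ] ℂ) v).hasFDerivAt (x := (0:ℂ))
        apply this.congr_of_eventuallyEq
        filter_upwards with w; simp
      have hcomp := hφd.comp (0:ℂ) hMd
      have hder : HasDerivAt g (((fderiv ℂ φ 0).comp
          (ContinuousLinearMap.smulRight (1 : ℂ →L[ℂ] ℂ) v)) 1) 0 := hcomp.hasDerivAt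
      rw [hder.deriv]
      simp [hfd]
    have hgim : ∀ᶠ z in nhds (0:ℂ), 0 < z.im → 0 ≤ (g z).im := by
      have hb : Metric.ball (0:ℂ) 1 ∈ nhds (0:ℂ) := Metric.ball_mem_nhds 0 one_pos
      filter_upwards [hb] with z hz hzim
      rw [Metric.mem_ball, dist_zero_right] at hz
      apply hC
      · intro j
        rw [hv]
        rcases hpos j with ⟨t, ht, hxj⟩
        by_cases hjT : j ∈ T
        · rw [Pi.smul_apply, Set.indicator_apply, if_pos hjT, hxj, smul_eq_mul]
          rw [mul_comm, Complex.im_ofReal_mul]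
          exact mul_nonneg ht (le_of_lt hzim)
        · rw [Pi.smul_apply, Set.indicator_apply, if_neg hjT]
          simp
      · rw [norm_smul]
        calc ‖z‖ * ‖v‖ ≤ 1 * ‖v‖ :=
              mul_le_mul_of_nonneg_right (le_of_lt hz) (norm_nonneg v)
          _ = ‖v‖ := one_mul _
          _ < 2 * ρ := by linarith
    have hzero : ∀ᶠ z in nhds (0:ℂ), g z = 0 :=
      aux_onevar g (hganal 0 (by norm_num)) hg0 hgd hgim
    have hAnOn : AnalyticOnNhd ℂ g (Metric.ball (0:ℂ) 2) := by
      intro z hz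
      exact hganal z (by rwa [Metric.mem_ball, dist_zero_right] at hz)
    have hEqOn := hAnOn.eqOn_zero_of_preconnected_of_frequently_eq_zero
      (convex_ball (0:ℂ) 2).isPreconnected
      (by rw [Metric.mem_ball, dist_zero_right]; norm_num)
      ((hzero.filter_mono nhdsWithin_le_nhds).frequently)
    have h1 : g 1 = 0 := hEqOn (by rw [Metric.mem_ball, dist_zero_right]; norm_num)
    simpa [hg] using h1
  -- induction on the number of coordinates allowed to be complex
  have key : ∀ k : ℕ, ∀ x : Fin d → ℂ, ‖x‖ < ρ →
      (∀ j : Fin d, k ≤ (j:ℕ) → ∃ t : ℝ, 0 ≤ t ∧ x j = t) → φ (T.indicator x) = 0 := by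
    intro k
    induction k with
    | zero => exact fun x hx hpos => base x hx fun j => hpos j (Nat.zero_le _)
    | succ k ih =>
      intro x hx hpos
      by_cases hkd : k < d
      · set j₀ : Fin d := ⟨k, hkd⟩ with hj₀
        have hxj : ∀ j, ‖x j‖ < ρ := fun j => lt_of_le_of_lt (norm_le_pi_norm x j) hx
        set w : Fin d → ℂ := T.indicator (Function.update x j₀ 0) with hw
        set e' : Fin d → ℂ := T.indicator (Pi.single j₀ 1) with he'
        have hrep : ∀ z : ℂ, w + z • e' = T.indicator (Function.update x j₀ z) := by
          intro z
          funext j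
          by_cases hj : j = j₀ <;> by_cases hjT : j ∈ T <;>
            simp [hw, he', Set.indicator_apply, Function.update_apply, hj, hjT,
              Pi.single_apply]
        set h : ℂ → ℂ := fun z => φ (w + z • e') with hh
        have hnorm : ∀ z : ℂ, ‖z‖ < ρ → ‖w + z • e'‖ < ρ := by
          intro z hz
          rw [hrep z, pi_norm_lt_iff hρ]
          intro j
          rw [Set.indicator_apply]
          split
          · rw [Function.update_apply]
            split
            · exact hz
            · exact hxj j
          · simpa using hρ
        have hAn : AnalyticOnNhd ℂ h (Metric.ball (0:ℂ) ρ) := by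
          intro z hz
          rw [Metric.mem_ball, dist_zero_right] at hz
          have h1 : AnalyticAt ℂ φ (w + z • e') := hmem _ (by linarith [hnorm z hz])
          have h2 : AnalyticAt ℂ (fun z : ℂ => w + z • e') z := by
            apply analyticAt_const.add
            exact ((ContinuousLinearMap.smulRight (1 : ℂ →L[ℂ] ℂ) e').analyticAt z).congr
              (by filter_upwards with q; simp)
          have h3 : AnalyticAt ℂ (φ ∘ fun z : ℂ => w + z • e') z := h1.comp_of_eq h2 rfl
          exact h3
        have hzero : ∀ t : ℝ, 0 < t → t < ρ → h t = 0 := by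
          intro t ht htρ
          rw [hh]
          simp only
          rw [hrep]
          apply ih
          · rw [pi_norm_lt_iff hρ]
            intro j
            rw [Function.update_apply]
            split
            · simpa [abs_of_pos ht] using htρ
            · exact hxj j
          · intro j hj
            by_cases hjj : j = j₀
            · exact ⟨t, le_of_lt ht, by rw [hjj, Function.update_self]⟩
            · have hjk : (j:ℕ) ≠ k := fun hc => hjj (Fin.ext hc)
              have : k + 1 ≤ (j:ℕ) := by omega
              rw [Function.update_of_ne hjj]
              exact hpos j this
        have hfreq : ∃ᶠ z in nhdsWithin ((ρ/2 : ℝ) : ℂ) {((ρ/2 : ℝ) : ℂ)}ᶜ, h z = 0 := by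
          have htend : Filter.Tendsto (fun t : ℝ => (t : ℂ))
              (nhdsWithin (ρ/2) {(ρ/2 : ℝ)}ᶜ)
              (nhdsWithin ((ρ/2 : ℝ) : ℂ) {((ρ/2 : ℝ) : ℂ)}ᶜ) := by
            rw [tendsto_nhdsWithin_iff]
            constructor
            · exact (Complex.continuous_ofReal.tendsto _).mono_left nhdsWithin_le_nhds
            · filter_upwards [self_mem_nhdsWithin] with t ht
              simp only [Set.mem_compl_iff, Set.mem_singleton_iff] at ht ⊢
              exact fun hc => ht (Complex.ofReal_inj.1 hc)
          apply htend.frequently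
          apply Filter.Eventually.frequently
          have hIoo : Set.Ioo (0:ℝ) ρ ∈ nhdsWithin (ρ/2) {(ρ/2 : ℝ)}ᶜ := by
            apply mem_nhdsWithin_of_mem_nhds
            exact isOpen_Ioo.mem_nhds ⟨by linarith, by linarith⟩
          filter_upwards [hIoo] with t ht
          exact hzero t ht.1 ht.2
        have hEqOn := hAn.eqOn_zero_of_preconnected_of_frequently_eq_zero
          (convex_ball (0:ℂ) ρ).isPreconnected
          (by rw [Metric.mem_ball, dist_zero_right]; simpa [abs_of_pos hρ] using (by linarith : ρ/2 < ρ)) hfreq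
        have hx0 : h (x j₀) = 0 := hEqOn (by rw [Metric.mem_ball, dist_zero_right]; exact hxj j₀)
        rw [hh] at hx0
        simp only at hx0
        rwa [hrep, Function.update_eq_self] at hx0
      · exact ih x hx fun j hj => hpos j (by omega)
  refine ⟨ρ, hρ, fun x hcoord => ?_⟩
  have hx : ‖x‖ < ρ := (pi_norm_lt_iff hρ).2 hcoord
  exact key d x hx fun j hj => absurd hj (by omega)
end

section
/- Let φ be analytic near 0 in ℂ^d with φ(0)=0, all components of ∇φ(0) strictly positive real numbers, and Im φ(x) ≥ 0 for real x near 0. Then for x = u + iv ∈ closure(ℍ)^d close to 0 (u ∈ ℝ^d, v ∈ [0,∞)^d), one has Im(φ(x)) ≥ c·(Im φ(u) + |v|) for some constant c > 0. -/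
open Complex

/-- If `φ` is analytic at `0`, `φ 0 = 0`, all components of `∇φ(0)` are
strictly positive reals, and `Im φ ≥ 0` on `ℝ^d` near `0`, then for
`x = u + iv` in the closed poly-upper-half-plane close to `0`,
`Im(φ(x)) ≥ c·(Im φ(u) + |v|)`. -/
theorem stmt_6 (d : ℕ) (φ : (Fin d → ℂ) → ℂ) (hφ : AnalyticAt ℂ φ 0)
    (h0 : φ 0 = 0)
    (hgrad : ∀ j : Fin d, (fderiv ℂ φ 0 (Pi.single j 1)).im = 0 ∧
      0 < (fderiv ℂ φ 0 (Pi.single j 1)).re)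
    (hpos : ∃ ε > 0, ∀ u : Fin d → ℝ, (∀ j, |u j| < ε) →
      0 ≤ (φ (fun j => (u j : ℂ))).im) :
    ∃ c > 0, ∃ ε > 0, ∀ u v : Fin d → ℝ, (∀ j, 0 ≤ v j) →
      (∀ j, |u j| < ε) → (∀ j, |v j| < ε) →
      c * ((φ (fun j => (u j : ℂ))).im + ‖v‖) ≤
        (φ (fun j => (u j : ℂ) + (v j : ℂ) * I)).im := by
  rcases Nat.eq_zero_or_pos d with hd | hd
  · subst hd
    refine ⟨1, one_pos, 1, one_pos, fun u v _ _ _ => ?_⟩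
    have hu : (fun j : Fin 0 => (u j : ℂ)) = 0 := funext fun j => j.elim0
    have huv : (fun j : Fin 0 => (u j : ℂ) + (v j : ℂ) * I) = 0 := funext fun j => j.elim0
    have hv : v = 0 := funext fun j => j.elim0
    rw [hu, huv, h0, hv]
    simp
  haveI : Nonempty (Fin d) := Fin.pos_iff_nonempty.mp hd
  obtain ⟨ε₀, hε₀, hpos⟩ := hpos
  set L0 := fderiv ℂ φ 0 with hL0
  have hne : (Finset.univ : Finset (Fin d)).Nonempty := Finset.univ_nonempty
  set a := Finset.univ.inf' hne (fun j => (L0 (Pi.single j 1)).re) with ha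
  have ha_pos : 0 < a := by
    rw [ha, Finset.lt_inf'_iff]
    exact fun j _ => (hgrad j).2
  have ha_le : ∀ j, a ≤ (L0 (Pi.single j 1)).re :=
    fun j => Finset.inf'_le _ (Finset.mem_univ j)
  have hfd : ContinuousAt (fderiv ℂ φ) 0 := hφ.fderiv.continuousAt
  obtain ⟨δ₁, hδ₁, hcont⟩ := Metric.continuousAt_iff.mp hfd (a / 2) (by positivity)
  obtain ⟨δ₂, hδ₂, hball⟩ := Metric.eventually_nhds_iff.mp hφ.eventually_analyticAt
  set δ := min δ₁ δ₂ with hδdef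
  have hδ : 0 < δ := lt_min hδ₁ hδ₂
  set ε := min ε₀ (δ / 3) with hεdef
  have hε : 0 < ε := lt_min hε₀ (by positivity)
  refine ⟨min 1 (a / 2), lt_min one_pos (by positivity), ε, hε, fun u v hv hu hvε => ?_⟩
  set w : Fin d → ℂ := fun j => (v j : ℂ) * I with hw
  set X : ℝ → (Fin d → ℂ) := fun t => (fun j => (u j : ℂ)) + t • w with hX
  have hXderiv : ∀ t : ℝ, HasDerivAt X w t := by
    intro t
    have := ((hasDerivAt_id t).smul_const w).const_add (fun j => (u j : ℂ))
    rw [one_smul] at this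
    exact this
  have hXmem : ∀ t ∈ Set.Icc (0:ℝ) 1, ‖X t‖ < δ := by
    intro t ht
    rw [pi_norm_lt_iff hδ]
    intro j
    have h1 : ‖X t j‖ ≤ |u j| + |v j| := by
      have : X t j = (u j : ℂ) + t • ((v j : ℂ) * I) := rfl
      rw [this]
      refine (norm_add_le _ _).trans ?_
      gcongr
      · simp
      · rw [norm_smul]
        simp only [norm_mul, Complex.norm_I, Complex.norm_real, mul_one,
          Real.norm_eq_abs]
        calc |t| * |v j| ≤ 1 * |v j| := by
              gcongr; rw [abs_le]; exact ⟨by linarith [ht.1], ht.2⟩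
          _ = |v j| := one_mul _
    have h2 : |u j| < δ / 3 := lt_of_lt_of_le (hu j) (min_le_right _ _)
    have h3 : |v j| < δ / 3 := lt_of_lt_of_le (hvε j) (min_le_right _ _)
    linarith
  -- derivative formula
  have hderiv : ∀ t ∈ Set.Icc (0:ℝ) 1,
      HasDerivAt (fun s => (φ (X s)).im)
        (∑ j, v j * ((fderiv ℂ φ (X t)) (Pi.single j 1)).re) t := by
    intro t ht
    have hXt : dist (X t) 0 < δ₂ := by
      rw [dist_zero_right]; exact lt_of_lt_of_le (hXmem t ht) (min_le_right _ _)
    have hdiff : HasFDerivAt φ (fderiv ℂ φ (X t)) (X t) :=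
      ((hball hXt).differentiableAt).hasFDerivAt
    have hcomp : HasDerivAt (fun s => φ (X s)) (fderiv ℂ φ (X t) w) t := by
      have hdiffR : HasFDerivAt φ ((fderiv ℂ φ (X t)).restrictScalars ℝ) (X t) :=
        hdiff.restrictScalars ℝ
      have := hdiffR.comp_hasDerivAt t (hXderiv t)
      exact this
    have him : HasDerivAt (fun s => (φ (X s)).im) ((fderiv ℂ φ (X t) w).im) t := by
      have himc : HasFDerivAt (fun z : ℂ => z.im) Complex.imCLM (φ (X t)) :=
        Complex.imCLM.hasFDerivAt
      have := himc.comp_hasDerivAt t hcomp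
      exact this
    convert him using 1
    have hwsum : w = ∑ j, ((v j : ℂ) * I) • (Pi.single j (1:ℂ) : Fin d → ℂ) := by
      have : w = ∑ j, Pi.single j (w j) := (Finset.univ_sum_single w).symm
      rw [this]
      congr 1
      funext j
      ext k
      by_cases h : k = j <;> simp [Pi.single_apply, h, hw]
    rw [hwsum, map_sum, Complex.im_sum]
    congr 1
    funext j
    rw [map_smul]
    simp [Complex.mul_im, smul_eq_mul]
  -- lower bound on derivative
  set m := (a / 2) * ∑ j, v j with hm
  have hlow : ∀ t ∈ Set.Icc (0:ℝ) 1,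
      m ≤ ∑ j, v j * ((fderiv ℂ φ (X t)) (Pi.single j 1)).re := by
    intro t ht
    rw [hm, Finset.mul_sum]
    refine Finset.sum_le_sum fun j _ => ?_
    rw [mul_comm (a/2) (v j)]
    refine mul_le_mul_of_nonneg_left ?_ (hv j)
    have hXt : dist (X t) 0 < δ₁ := by
      rw [dist_zero_right]; exact lt_of_lt_of_le (hXmem t ht) (min_le_left _ _)
    have hnear := hcont hXt
    rw [dist_eq_norm] at hnear
    have hev : ‖(fderiv ℂ φ (X t) - L0) (Pi.single j 1)‖ ≤ ‖fderiv ℂ φ (X t) - L0‖ := by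
      have := (fderiv ℂ φ (X t) - L0).le_opNorm (Pi.single j 1)
      simpa [Pi.norm_single] using this
    have hre : |((fderiv ℂ φ (X t)) (Pi.single j 1) - L0 (Pi.single j 1)).re| ≤
        ‖fderiv ℂ φ (X t) - L0‖ := by
      refine le_trans (Complex.abs_re_le_norm _) ?_
      simpa [ContinuousLinearMap.sub_apply] using hev
    have hha := ha_le j
    have habs := abs_le.mp hre
    have hsub : ((fderiv ℂ φ (X t)) (Pi.single j 1) - L0 (Pi.single j 1)).re =
        ((fderiv ℂ φ (X t)) (Pi.single j 1)).re - (L0 (Pi.single j 1)).re :=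
      Complex.sub_re _ _
    rw [hsub] at habs
    linarith [habs.1]
  -- monotonicity
  have key : (φ (X 0)).im + m ≤ (φ (X 1)).im := by
    set F : ℝ → ℝ := fun t => (φ (X t)).im - m * t with hF
    have hF' : ∀ t ∈ Set.Icc (0:ℝ) 1, HasDerivAt F
        ((∑ j, v j * ((fderiv ℂ φ (X t)) (Pi.single j 1)).re) - m) t := by
      intro t ht
      have hlin : HasDerivAt (fun s : ℝ => m * s) m t := by
        simpa using (hasDerivAt_id t).const_mul m
      exact (hderiv t ht).sub hlin
    have hmono : MonotoneOn F (Set.Icc 0 1) := by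
      refine monotoneOn_of_deriv_nonneg (convex_Icc 0 1)
        (fun t ht => (hF' t ht).continuousAt.continuousWithinAt)
        (fun t ht => ?_) (fun t ht => ?_)
      · rw [interior_Icc] at ht
        exact (hF' t (Set.mem_Icc_of_Ioo ht)).differentiableAt.differentiableWithinAt
      · rw [interior_Icc] at ht
        rw [(hF' t (Set.mem_Icc_of_Ioo ht)).deriv]
        have := hlow t (Set.mem_Icc_of_Ioo ht)
        linarith
    have h01 := hmono (Set.left_mem_Icc.mpr zero_le_one) (Set.right_mem_Icc.mpr zero_le_one)
      zero_le_one
    simp only [hF] at h01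
    linarith [h01]
  have hX0 : X 0 = fun j => (u j : ℂ) := by
    funext j; simp [hX]
  have hX1 : X 1 = fun j => (u j : ℂ) + (v j : ℂ) * I := by
    funext j; simp [hX, hw]
  rw [hX0, hX1] at key
  have hP : 0 ≤ (φ (fun j => (u j : ℂ))).im :=
    hpos u fun j => lt_of_lt_of_le (hu j) (min_le_left _ _)
  have hvnorm : ‖v‖ ≤ ∑ j, v j := by
    rw [pi_norm_le_iff_of_nonneg (Finset.sum_nonneg fun j _ => hv j)]
    intro j
    rw [Real.norm_eq_abs, _root_.abs_of_nonneg (hv j)]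
    exact Finset.single_le_sum (fun i _ => hv i) (Finset.mem_univ j)
  have hmin1 : min 1 (a/2) ≤ 1 := min_le_left _ _
  have hmin2 : min 1 (a/2) ≤ a/2 := min_le_right _ _
  have hminpos : 0 < min 1 (a/2) := lt_min one_pos (by positivity)
  have hnv : (0:ℝ) ≤ ‖v‖ := norm_nonneg _
  nlinarith [mul_le_mul_of_nonneg_left hvnorm (le_of_lt (by positivity : (0:ℝ) < a/2))]
end

section
/- Let φ be analytic near 0 in ℂ^d with φ(0)=0, ∇φ(0) ∈ (0,∞)^d, and Im φ ≥ 0 on ℝ^d near 0. Write φ = A + iB where A, B are the real and imaginary parts of the coefficient series. Then the function B(x)/(z + φ(x)) is bounded on a set of the form (ℍ^{d} × ℍ) ∩ (polydisk of radius ε about 0) for some ε > 0. -/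
open Complex Metric

lemma clm_pi_decomp {d : ℕ} (T : (Fin d → ℂ) →L[ℂ] ℂ) (w : Fin d → ℂ) :
    T w = ∑ j, w j * T (Pi.single j 1) := by
  conv_lhs => rw [pi_eq_sum_univ w]
  rw [map_sum]
  refine Finset.sum_congr rfl fun j _ => ?_
  rw [map_smul, smul_eq_mul]
  congr 2
  funext i
  simp [Pi.single_apply, eq_comm]

set_option maxHeartbeats 1000000 in
/-- With `φ` analytic at `0`, `φ 0 = 0`, `∇φ(0) ∈ (0,∞)^d`, and `Im φ ≥ 0` on
`ℝ^d` near `0`, the function `B(x)/(z + φ(x))` is bounded on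
`(ℍ^d × ℍ) ∩ (small polydisk)`, where `B(x) = (φ(x) − conj(φ(conj x)))/(2i)`
is the imaginary-coefficient part of `φ`. -/
theorem stmt_7 (d : ℕ) (φ : (Fin d → ℂ) → ℂ) (hφ : AnalyticAt ℂ φ 0)
    (h0 : φ 0 = 0)
    (hgrad : ∀ j : Fin d, (fderiv ℂ φ 0 (Pi.single j 1)).im = 0 ∧
      0 < (fderiv ℂ φ 0 (Pi.single j 1)).re)
    (hpos : ∃ ε > 0, ∀ u : Fin d → ℝ, (∀ j, |u j| < ε) →
      0 ≤ (φ (fun j => (u j : ℂ))).im) :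
    ∃ C > 0, ∃ ε > 0, ∀ (x : Fin d → ℂ) (z : ℂ),
      (∀ j, 0 < (x j).im) → 0 < z.im → (∀ j, ‖x j‖ < ε) → ‖z‖ < ε →
      ‖(φ x - (starRingEnd ℂ) (φ (fun j => (starRingEnd ℂ) (x j)))) / (2 * I)‖
        ≤ C * ‖z + φ x‖ := by
  obtain ⟨εp, hεp, hp⟩ := hpos
  rcases Nat.eq_zero_or_pos d with hd | hd
  · subst hd
    refine ⟨1, one_pos, 1, one_pos, fun x z hx hz hxe hze => ?_⟩
    have hx0 : x = 0 := Subsingleton.elim _ _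
    have h1 : φ x = 0 := by rw [hx0, h0]
    have h2 : φ (fun j => (starRingEnd ℂ) (x j)) = 0 := by
      rw [show (fun j => (starRingEnd ℂ) (x j)) = (0 : Fin 0 → ℂ) from Subsingleton.elim _ _, h0]
    rw [h1, h2]
    simpa using norm_nonneg (z + 0)
  haveI : Nonempty (Fin d) := Fin.pos_iff_nonempty.mp hd
  set F := fderiv ℂ φ with hF
  set c : ℝ := (Finset.univ.inf' Finset.univ_nonempty
      fun j => (F 0 (Pi.single j 1)).re) / 2 with hc
  have hc0 : 0 < c := by
    apply div_pos _ two_pos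
    rw [Finset.lt_inf'_iff]
    exact fun j _ => (hgrad j).2
  have hca : ∀ j, 2 * c ≤ (F 0 (Pi.single j 1)).re := by
    intro j
    have h1 := Finset.inf'_le (fun j => (F 0 (Pi.single j 1)).re) (Finset.mem_univ j)
    rw [hc]; linarith
  have hev2 : ∀ᶠ y in nhds (0 : Fin d → ℂ), ‖F y - F 0‖ < c := by
    have ht : Filter.Tendsto F (nhds 0) (nhds (F 0)) := hφ.fderiv.continuousAt
    filter_upwards [ht (Metric.ball_mem_nhds (F 0) hc0)] with y hy
    simpa [mem_ball_iff_norm, dist_eq_norm] using hy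
  obtain ⟨δ, hδ0, hδ⟩ := Metric.eventually_nhds_iff_ball.mp
    (hφ.eventually_analyticAt.and hev2)
  set L : ℝ := ‖F 0‖ + c with hLdef
  have hL0 : 0 < L := lt_of_lt_of_le hc0 (le_add_of_nonneg_left (norm_nonneg _))
  set C : ℝ := (L + c) / c with hCdef
  have hC1 : 1 ≤ C := by
    rw [hCdef, le_div_iff₀ hc0]; linarith
  have hCc : L ≤ C * c := by
    rw [hCdef, div_mul_cancel₀]
    · linarith
    · exact ne_of_gt hc0
  refine ⟨C, lt_of_lt_of_le one_pos hC1, min δ εp, lt_min hδ0 hεp,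
    fun x z hxim hzim hxε hzε => ?_⟩
  set v : Fin d → ℝ := fun j => (x j).im with hv
  set u : Fin d → ℂ := fun j => ((x j).re : ℂ) with hu
  set w : Fin d → ℂ := fun j => ((v j : ℂ) * I) with hw
  set xc : Fin d → ℂ := fun j => (starRingEnd ℂ) (x j) with hxc
  have hvj : ∀ j, 0 < v j := hxim
  have hxj : ∀ j, ‖x j‖ < δ := fun j => lt_of_lt_of_le (hxε j) (min_le_left _ _)
  have hxδ : ‖x‖ < δ := (pi_norm_lt_iff hδ0).2 hxj
  -- basic norm bounds
  have habsim : ∀ j, |v j| ≤ ‖x j‖ := fun j => Complex.abs_im_le_norm (x j)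
  have habsre : ∀ j, |(x j).re| ≤ ‖x j‖ := fun j => Complex.abs_re_le_norm (x j)
  have hvnorm : ∀ j, ‖v j‖ ≤ ‖v‖ := fun j => norm_le_pi_norm v j
  -- the path from Re x to x
  set γ : ℝ → (Fin d → ℂ) := fun t => u + t • w with hγ
  have hγj : ∀ t j, γ t j = ((x j).re : ℂ) + ((t * v j : ℝ) : ℂ) * I := by
    intro t j
    simp only [hγ, Pi.add_apply, Pi.smul_apply, hu, hw, Complex.real_smul]
    push_cast
    ring
  have hγnorm : ∀ t ∈ Set.Icc (0:ℝ) 1, ∀ j, ‖γ t j‖ ≤ ‖x j‖ := by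
    intro t ht j
    rw [hγj t j, Complex.norm_add_mul_I,
      Complex.norm_def, Complex.normSq_apply]
    apply Real.sqrt_le_sqrt
    simp only [hv]
    have ht2 : t * t ≤ 1 := by nlinarith [ht.1, ht.2]
    nlinarith [ht2, mul_self_nonneg ((x j).im), sq_nonneg ((x j).re), mul_self_nonneg (t * (x j).im)]
  have hγball : ∀ t ∈ Set.Icc (0:ℝ) 1, γ t ∈ Metric.ball (0 : Fin d → ℂ) δ := by
    intro t ht
    rw [mem_ball_zero_iff]
    refine lt_of_le_of_lt ?_ hxδ
    exact (pi_norm_le_iff_of_nonneg (norm_nonneg x)).2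
      fun i => le_trans (hγnorm t ht i) (norm_le_pi_norm x i)
  have hγ0 : γ 0 = fun j => (((x j).re : ℝ) : ℂ) := by
    funext j; rw [hγj]; push_cast; ring
  have hγ1 : γ 1 = x := by
    funext j; rw [hγj]; push_cast; rw [one_mul]; exact Complex.re_add_im (x j)
  -- derivative data
  set g : ℝ → ℝ := fun t => (φ (γ t)).im with hg
  set g' : ℝ → ℝ := fun t => (F (γ t) w).im with hg'
  have hγd : ∀ t : ℝ, HasDerivAt γ w t := by
    intro t
    have h1 : HasDerivAt (fun s : ℝ => s • w) ((1:ℝ) • w) t :=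
      HasDerivAt.smul_const (𝕜' := ℝ) (hasDerivAt_id t) w
    have h2 := h1.const_add u
    rw [one_smul] at h2
    exact h2
  have hderiv : ∀ t ∈ Set.Icc (0:ℝ) 1, HasDerivAt g (g' t) t := by
    intro t ht
    have han : AnalyticAt ℂ φ (γ t) := (hδ _ (hγball t ht)).1
    have hφd : HasFDerivAt φ (F (γ t)) (γ t) :=
      han.differentiableAt.hasFDerivAt
    have h2 := (hφd.restrictScalars ℝ).comp_hasDerivAt t (hγd t)
    exact (Complex.imCLM.hasFDerivAt.comp_hasDerivAt t h2)
  -- lower bound on g'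
  have hg'lb : ∀ t ∈ Set.Icc (0:ℝ) 1, c * ‖v‖ ≤ g' t := by
    intro t ht
    have hmem := hγball t ht
    have hFd : ‖F (γ t) - F 0‖ < c := (hδ _ hmem).2
    have hre : ∀ j, c ≤ (F (γ t) (Pi.single j 1)).re := by
      intro j
      have h1 : ‖(F (γ t) - F 0) (Pi.single j 1)‖ ≤ ‖F (γ t) - F 0‖ * ‖(Pi.single j (1:ℂ) : Fin d → ℂ)‖ :=
        (F (γ t) - F 0).le_opNorm _
      rw [Pi.norm_single, norm_one, mul_one] at h1
      have h2 : |((F (γ t) - F 0) (Pi.single j 1)).re| ≤ ‖(F (γ t) - F 0) (Pi.single j 1)‖ :=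
        Complex.abs_re_le_norm _
      have h3 : ((F (γ t) - F 0) (Pi.single j 1)).re
          = (F (γ t) (Pi.single j 1)).re - (F 0 (Pi.single j 1)).re := by
        rw [ContinuousLinearMap.sub_apply, Complex.sub_re]
      have h4 := hca j
      rw [h3] at h2
      have := abs_le.mp (le_trans h2 h1)
      linarith [this.1]
    have hdecomp : g' t = ∑ j, v j * (F (γ t) (Pi.single j 1)).re := by
      show (F (γ t) w).im = _
      rw [clm_pi_decomp]
      rw [Complex.im_sum]
      refine Finset.sum_congr rfl fun j _ => ?_
      rw [hw]
      simp [Complex.mul_im, Complex.mul_re]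
    rw [hdecomp]
    have hsum : ‖v‖ ≤ ∑ j, v j := by
      refine (pi_norm_le_iff_of_nonneg ?_).2 fun i => ?_
      · exact Finset.sum_nonneg fun j _ => le_of_lt (hvj j)
      · rw [Real.norm_eq_abs, abs_of_pos (hvj i)]
        exact Finset.single_le_sum (fun j _ => le_of_lt (hvj j)) (Finset.mem_univ i)
    calc c * ‖v‖ ≤ c * ∑ j, v j := by
          exact mul_le_mul_of_nonneg_left hsum (le_of_lt hc0)
      _ = ∑ j, c * v j := Finset.mul_sum _ _ _
      _ ≤ ∑ j, v j * (F (γ t) (Pi.single j 1)).re := by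
          refine Finset.sum_le_sum fun j _ => ?_
          rw [mul_comm c (v j)]
          exact mul_le_mul_of_nonneg_left (hre j) (le_of_lt (hvj j))
  -- mean value: g 1 - g 0 ≥ c * ‖v‖
  have hmv : g 0 + c * ‖v‖ ≤ g 1 := by
    set h : ℝ → ℝ := fun t => g t - c * ‖v‖ * t with hh
    have hhd : ∀ t ∈ Set.Icc (0:ℝ) 1, HasDerivAt h (g' t - c * ‖v‖) t := by
      intro t ht
      have := (hderiv t ht).sub (((hasDerivAt_id t).const_mul (c * ‖v‖)))
      rw [mul_one] at this; exact this
    have hmono : MonotoneOn h (Set.Icc (0:ℝ) 1) := by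
      apply monotoneOn_of_deriv_nonneg (convex_Icc 0 1)
      · exact fun t ht => ((hhd t ht).continuousAt).continuousWithinAt
      · intro t ht
        exact ((hhd t (interior_subset ht)).differentiableAt).differentiableWithinAt
      · intro t ht
        rw [(hhd t (interior_subset ht)).deriv]
        have := hg'lb t (interior_subset ht)
        linarith
    have := hmono (Set.left_mem_Icc.2 zero_le_one) (Set.right_mem_Icc.2 zero_le_one) zero_le_one
    simp only [hh] at this
    linarith
  have hg0 : 0 ≤ g 0 := by
    have e : g 0 = (φ (fun j => (((x j).re : ℝ) : ℂ))).im := by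
      show (φ (γ 0)).im = _
      rw [hγ0]
    rw [e]
    exact hp (fun j => (x j).re) fun j =>
      lt_of_le_of_lt (habsre j) (lt_of_lt_of_le (hxε j) (min_le_right _ _))
  -- Lipschitz bounds
  have hds : ∀ y ∈ Metric.ball (0 : Fin d → ℂ) δ,
      HasFDerivWithinAt φ (F y) (Metric.ball (0 : Fin d → ℂ) δ) y :=
    fun y hy => ((hδ y hy).1.differentiableAt.hasFDerivAt).hasFDerivWithinAt
  have hbd : ∀ y ∈ Metric.ball (0 : Fin d → ℂ) δ, ‖F y‖ ≤ L := by
    intro y hy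
    have h1 := (hδ y hy).2
    calc ‖F y‖ ≤ ‖F 0‖ + ‖F y - F 0‖ := by
          simpa using norm_add_le (F 0) (F y - F 0)
      _ ≤ L := by rw [hLdef]; linarith
  have hub : u ∈ Metric.ball (0 : Fin d → ℂ) δ := by
    rw [mem_ball_zero_iff]
    refine lt_of_le_of_lt ((pi_norm_le_iff_of_nonneg (norm_nonneg x)).2 fun i => ?_) hxδ
    calc ‖u i‖ = |(x i).re| := by simp [hu, Complex.norm_real]
      _ ≤ ‖x i‖ := habsre i
      _ ≤ ‖x‖ := norm_le_pi_norm x i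
  have hxb : x ∈ Metric.ball (0 : Fin d → ℂ) δ := mem_ball_zero_iff.2 hxδ
  have hxcb : xc ∈ Metric.ball (0 : Fin d → ℂ) δ := by
    rw [mem_ball_zero_iff]
    refine lt_of_le_of_lt ((pi_norm_le_iff_of_nonneg (norm_nonneg x)).2 fun i => ?_) hxδ
    simpa [hxc] using norm_le_pi_norm x i
  have hxu : ‖x - u‖ ≤ ‖v‖ := by
    refine (pi_norm_le_iff_of_nonneg (norm_nonneg v)).2 fun i => ?_
    have : (x - u) i = (v i : ℂ) * I := by
      apply Complex.ext <;> simp [hu, hv]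
    rw [this]
    simp only [norm_mul, Complex.norm_I, mul_one, Complex.norm_real]
    exact hvnorm i
  have hxcu : ‖xc - u‖ ≤ ‖v‖ := by
    refine (pi_norm_le_iff_of_nonneg (norm_nonneg v)).2 fun i => ?_
    have : (xc - u) i = -((v i : ℂ) * I) := by
      apply Complex.ext <;> simp [hxc, hu, hv]
    rw [this, norm_neg]
    simp only [norm_mul, Complex.norm_I, mul_one, Complex.norm_real]
    exact hvnorm i
  have hlip1 : ‖φ x - φ u‖ ≤ L * ‖v‖ := by
    have := (convex_ball (0 : Fin d → ℂ) δ).norm_image_sub_le_of_norm_hasFDerivWithin_le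
      hds hbd hub hxb
    calc ‖φ x - φ u‖ ≤ L * ‖x - u‖ := this
      _ ≤ L * ‖v‖ := mul_le_mul_of_nonneg_left hxu (le_of_lt hL0)
  have hlip2 : ‖φ xc - φ u‖ ≤ L * ‖v‖ := by
    have := (convex_ball (0 : Fin d → ℂ) δ).norm_image_sub_le_of_norm_hasFDerivWithin_le
      hds hbd hub hxcb
    calc ‖φ xc - φ u‖ ≤ L * ‖xc - u‖ := this
      _ ≤ L * ‖v‖ := mul_le_mul_of_nonneg_left hxcu (le_of_lt hL0)
  -- φ u and its conjugate
  have hφu : (φ u).im = g 0 := by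
    rw [hu, ← hγ0]
  have hmid : ‖φ u - (starRingEnd ℂ) (φ u)‖ = 2 * g 0 := by
    rw [Complex.sub_conj, hφu, norm_mul, Complex.norm_I, mul_one, Complex.norm_real,
      Real.norm_eq_abs, _root_.abs_of_nonneg (by linarith : (0:ℝ) ≤ 2 * g 0)]
  -- numerator bound
  have hnum : ‖φ x - (starRingEnd ℂ) (φ xc)‖ ≤ 2 * g 0 + 2 * (L * ‖v‖) := by
    have hsplit : φ x - (starRingEnd ℂ) (φ xc)
        = (φ x - φ u) + (φ u - (starRingEnd ℂ) (φ u))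
          + ((starRingEnd ℂ) (φ u) - (starRingEnd ℂ) (φ xc)) := by ring
    rw [hsplit]
    have h3 : ‖(starRingEnd ℂ) (φ u) - (starRingEnd ℂ) (φ xc)‖ = ‖φ xc - φ u‖ := by
      rw [← map_sub, RCLike.norm_conj, norm_sub_rev]
    calc ‖(φ x - φ u) + (φ u - (starRingEnd ℂ) (φ u))
          + ((starRingEnd ℂ) (φ u) - (starRingEnd ℂ) (φ xc))‖
        ≤ ‖φ x - φ u‖ + ‖φ u - (starRingEnd ℂ) (φ u)‖
          + ‖(starRingEnd ℂ) (φ u) - (starRingEnd ℂ) (φ xc)‖ :=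
        norm_add₃_le
      _ ≤ L * ‖v‖ + 2 * g 0 + L * ‖v‖ := by
          rw [hmid, h3]
          exact add_le_add (add_le_add hlip1 le_rfl) hlip2
      _ = 2 * g 0 + 2 * (L * ‖v‖) := by ring
  -- denominator bound
  have hden : g 0 + c * ‖v‖ ≤ ‖z + φ x‖ := by
    have h1 : (z + φ x).im ≤ ‖z + φ x‖ :=
      le_trans (le_abs_self _) (Complex.abs_im_le_norm _)
    have h2 : (z + φ x).im = z.im + g 1 := by
      show _ = z.im + (φ (γ 1)).im
      rw [hγ1, Complex.add_im]
    linarith [hmv, hzim]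
  -- conclude
  have hlhs : ‖(φ x - (starRingEnd ℂ) (φ xc)) / (2 * I)‖ = ‖φ x - (starRingEnd ℂ) (φ xc)‖ / 2 := by
    rw [norm_div]
    norm_num
  have hgoal : (φ fun j => (starRingEnd ℂ) (x j)) = φ xc := rfl
  rw [hgoal, hlhs]
  have hv0 : 0 ≤ ‖v‖ := norm_nonneg v
  have hden0 : 0 ≤ ‖z + φ x‖ := norm_nonneg _
  have hhalf : ‖φ x - (starRingEnd ℂ) (φ xc)‖ / 2 ≤ g 0 + L * ‖v‖ := by
    rw [div_le_iff₀ (by norm_num : (0:ℝ) < 2)]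
    calc ‖φ x - (starRingEnd ℂ) (φ xc)‖ ≤ 2 * g 0 + 2 * (L * ‖v‖) := hnum
      _ = (g 0 + L * ‖v‖) * 2 := by ring
  calc ‖φ x - (starRingEnd ℂ) (φ xc)‖ / 2 ≤ g 0 + L * ‖v‖ := hhalf
    _ ≤ C * (g 0 + c * ‖v‖) := by nlinarith
    _ ≤ C * ‖z + φ x‖ := mul_le_mul_of_nonneg_left hden (by linarith)
end

section
/- Let φ be analytic near 0 in ℂ^d with φ(0)=0, ∇φ(0) ∈ (0,∞)^d, and Im φ ≥ 0 on ℝ^d near 0, with real/imaginary coefficient decomposition φ = A + iB. Suppose f ∈ ℂ{x_1,…,x_d} satisfies |f(u)| ≤ C·B(u) for all real u near 0. Then f(x)/(z + φ(x)) is bounded on ℍ^{d+1} intersected with a small polydisk about the origin. -/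
open Complex

set_option maxHeartbeats 1000000 in
/-- With `φ` analytic at `0`, `φ 0 = 0`, `∇φ(0) ∈ (0,∞)^d`, `Im φ ≥ 0` on
`ℝ^d` near `0`: if `f` is analytic at `0` and `|f(u)| ≤ C·B(u)` for real `u`
near `0` (where `B(u) = Im φ(u)`), then `f(x)/(z+φ(x))` is bounded on
`ℍ^{d+1}` intersected with a small polydisk about the origin. -/
theorem stmt_8 (d : ℕ) (φ f : (Fin d → ℂ) → ℂ)
    (hφ : AnalyticAt ℂ φ 0) (h0 : φ 0 = 0)
    (hgrad : ∀ j : Fin d, (fderiv ℂ φ 0 (Pi.single j 1)).im = 0 ∧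
      0 < (fderiv ℂ φ 0 (Pi.single j 1)).re)
    (hpos : ∃ ε > 0, ∀ u : Fin d → ℝ, (∀ j, |u j| < ε) →
      0 ≤ (φ (fun j => (u j : ℂ))).im)
    (hf : AnalyticAt ℂ f 0)
    (hbd : ∃ C > 0, ∃ ε > 0, ∀ u : Fin d → ℝ, (∀ j, |u j| < ε) →
      ‖f (fun j => (u j : ℂ))‖ ≤ C * (φ (fun j => (u j : ℂ))).im) :
    ∃ C' > 0, ∃ ε > 0, ∀ (x : Fin d → ℂ) (z : ℂ),
      (∀ j, 0 < (x j).im) → 0 < z.im → (∀ j, ‖x j‖ < ε) → ‖z‖ < ε →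
      ‖f x‖ ≤ C' * ‖z + φ x‖ := by
  classical
  obtain ⟨C, hC, ε₂, hε₂, hbd⟩ := hbd
  obtain ⟨ε₁, hε₁, hpos⟩ := hpos
  -- uniform lower bound on the gradient components
  obtain ⟨a, ha0, haj⟩ : ∃ a > 0, ∀ j, a ≤ (fderiv ℂ φ 0 (Pi.single j 1)).re := by
    rcases isEmpty_or_nonempty (Fin d) with h | h
    · exact ⟨1, one_pos, fun j => (h.false j).elim⟩
    · obtain ⟨j0, -, hj0⟩ := Finset.exists_min_image Finset.univ
        (fun j => (fderiv ℂ φ 0 (Pi.single j 1)).re) ⟨Classical.arbitrary _, Finset.mem_univ _⟩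
      exact ⟨_, (hgrad j0).2, fun j => hj0 j (Finset.mem_univ j)⟩
  -- Lipschitz bound for f near 0
  obtain ⟨K, t, ht, hlip⟩ := (hf.contDiffAt (n := 1)).exists_lipschitzOnWith
  obtain ⟨r1, hr1, hball⟩ := Metric.mem_nhds_iff.mp ht
  -- differentiability of φ and closeness of its derivative near 0
  have hev : ∀ᶠ y in nhds (0 : (Fin d → ℂ)), DifferentiableAt ℂ φ y ∧
      ‖fderiv ℂ φ y - fderiv ℂ φ 0‖ < a / 2 := by
    have h1 : ∀ᶠ y in nhds (0 : (Fin d → ℂ)), DifferentiableAt ℂ φ y :=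
      hφ.eventually_analyticAt.mono fun y hy => hy.differentiableAt
    have h2 : ∀ᶠ y in nhds (0 : (Fin d → ℂ)), ‖fderiv ℂ φ y - fderiv ℂ φ 0‖ < a / 2 := by
      have hc := (hφ.fderiv).continuousAt
      have := hc.eventually (Metric.ball_mem_nhds (fderiv ℂ φ 0) (by positivity : (0:ℝ) < a / 2))
      exact this.mono fun y hy => by simpa [Metric.mem_ball, dist_eq_norm] using hy
    exact h1.and h2
  obtain ⟨r, hr, hφr⟩ := Metric.eventually_nhds_iff.mp hev
  -- the constants
  set M : ℝ := max C (K : ℝ) with hM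
  set c : ℝ := min 1 (a / 2) with hc
  have hMpos : 0 < M := lt_of_lt_of_le hC (le_max_left _ _)
  have hcpos : 0 < c := lt_min one_pos (by positivity)
  set ε : ℝ := min (min ε₁ ε₂) (min (r1 / 2) (r / 4)) with hε
  have hεpos : 0 < ε := by
    refine lt_min (lt_min hε₁ hε₂) (lt_min (by positivity) (by positivity))
  refine ⟨M / c, by positivity, ε, hεpos, ?_⟩
  intro x z hx hz hxε hzε
  -- notation
  set u : Fin d → ℝ := fun j => (x j).re with hu
  set v : Fin d → ℝ := fun j => (x j).im with hv
  set uC : Fin d → ℂ := fun j => ((u j : ℝ) : ℂ) with huC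
  set vC : Fin d → ℂ := fun j => ((v j : ℝ) : ℂ) with hvC
  set w : Fin d → ℂ := Complex.I • vC with hw
  have hvpos : ∀ j, 0 < v j := hx
  set S : ℝ := ∑ j, v j with hS
  have hSnn : 0 ≤ S := Finset.sum_nonneg fun j _ => (hvpos j).le
  have hvleS : ∀ j, v j ≤ S :=
    fun j => Finset.single_le_sum (fun i _ => (hvpos i).le) (Finset.mem_univ j)
  have hxnorm : ‖x‖ < ε := by
    rcases isEmpty_or_nonempty (Fin d) with h | h
    · simp [norm_eq_zero.mpr (Subsingleton.elim x 0), hεpos]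
    · exact (pi_norm_lt_iff hεpos).mpr hxε
  have hujx : ∀ j, |u j| ≤ ‖x j‖ := fun j => Complex.abs_re_le_norm (x j)
  have huCnorm : ‖uC‖ ≤ ‖x‖ := by
    refine (pi_norm_le_iff_of_nonneg (norm_nonneg x)).mpr fun j => ?_
    calc ‖uC j‖ = |u j| := by simp [huC]
    _ ≤ ‖x j‖ := hujx j
    _ ≤ ‖x‖ := norm_le_pi_norm x j
  have hwnorm : ‖w‖ ≤ ‖x‖ := by
    refine (pi_norm_le_iff_of_nonneg (norm_nonneg x)).mpr fun j => ?_
    calc ‖w j‖ = |v j| := by simp [hw, hvC]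
    _ ≤ ‖x j‖ := Complex.abs_im_le_norm (x j)
    _ ≤ ‖x‖ := norm_le_pi_norm x j
  have hvCle : ‖vC‖ ≤ S := by
    refine (pi_norm_le_iff_of_nonneg hSnn).mpr fun j => ?_
    calc ‖vC j‖ = |v j| := by simp [hvC]
    _ = v j := abs_of_pos (hvpos j)
    _ ≤ S := hvleS j
  -- the decomposition x = uC + w
  have hxuw : x = uC + w := by
    funext j
    simp only [Pi.add_apply, huC, hw, Pi.smul_apply, hvC, smul_eq_mul]
    rw [mul_comm]
    exact (Complex.re_add_im (x j)).symm
  -- the real-part estimate on the derivative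
  have hkey : ∀ p : Fin d → ℂ, ‖p‖ < r → a / 2 * S ≤ ((fderiv ℂ φ p) vC).re := by
    intro p hp
    have hre0 : a * S ≤ ((fderiv ℂ φ 0) vC).re := by
      have hvCsum : vC = ∑ j, vC j • (Pi.single j 1 : Fin d → ℂ) := by
        funext i
        simp [Finset.sum_apply, Pi.single_apply]
      rw [hvCsum, map_sum, Complex.re_sum]
      have : ∀ j ∈ Finset.univ,
          a * v j ≤ ((fderiv ℂ φ 0) (vC j • (Pi.single j 1 : Fin d → ℂ))).re := by
        intro j _
        rw [map_smul]
        have : ((vC j) • (fderiv ℂ φ 0) (Pi.single j 1)).re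
            = v j * ((fderiv ℂ φ 0) (Pi.single j 1)).re := by
          simp [hvC, smul_eq_mul, Complex.mul_re]
        rw [this]
        have := mul_le_mul_of_nonneg_left (haj j) (hvpos j).le
        linarith [this]
      calc a * S = ∑ j, a * v j := by rw [hS, Finset.mul_sum]
      _ ≤ ∑ j, ((fderiv ℂ φ 0) (vC j • (Pi.single j 1 : Fin d → ℂ))).re :=
          Finset.sum_le_sum this
    have hdiff : |((fderiv ℂ φ p) vC - (fderiv ℂ φ 0) vC).re| ≤ a / 2 * S := by
      calc |((fderiv ℂ φ p) vC - (fderiv ℂ φ 0) vC).re|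
          ≤ ‖(fderiv ℂ φ p) vC - (fderiv ℂ φ 0) vC‖ := Complex.abs_re_le_norm _
      _ = ‖(fderiv ℂ φ p - fderiv ℂ φ 0) vC‖ := by simp
      _ ≤ ‖fderiv ℂ φ p - fderiv ℂ φ 0‖ * ‖vC‖ := (fderiv ℂ φ p - fderiv ℂ φ 0).le_opNorm vC
      _ ≤ (a / 2) * S := by
          have hp' : dist p 0 < r := by simpa [dist_eq_norm] using hp
          exact mul_le_mul ((hφr hp').2.le) hvCle (norm_nonneg _) (by positivity)
    have h1 : ((fderiv ℂ φ p) vC).re - ((fderiv ℂ φ 0) vC).re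
        = ((fderiv ℂ φ p) vC - (fderiv ℂ φ 0) vC).re := by simp
    have h2 := abs_le.mp hdiff
    nlinarith [h2.1, hre0]
  -- the path h and its properties
  set h : ℝ → (Fin d → ℂ) := fun s => uC + s • w with hh
  have hhnorm : ∀ s ∈ Set.Icc (0:ℝ) 1, ‖h s‖ < r := by
    intro s hs
    have : ‖h s‖ ≤ ‖uC‖ + |s| * ‖w‖ := by
      calc ‖h s‖ ≤ ‖uC‖ + ‖s • w‖ := norm_add_le _ _
      _ = ‖uC‖ + |s| * ‖w‖ := by rw [norm_smul, Real.norm_eq_abs]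
    have habs : |s| ≤ 1 := abs_le.mpr ⟨by linarith [hs.1], hs.2⟩
    have hε4 : ε ≤ r / 4 := le_trans (min_le_right _ _) (min_le_right _ _)
    nlinarith [norm_nonneg w, hwnorm, huCnorm, hxnorm]
  have hg : ∀ s ∈ Set.Icc (0:ℝ) 1,
      HasDerivAt (fun s => (φ (h s)).im) (((fderiv ℂ φ (h s)) w).im) s := by
    intro s hs
    have hdiff : DifferentiableAt ℂ φ (h s) :=
      (hφr (by simpa [dist_eq_norm] using hhnorm s hs)).1
    have hpath : HasDerivAt h w s := by
      have : HasDerivAt (fun s : ℝ => s • w) w s := by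
        simpa using (hasDerivAt_id s).smul_const w
      simpa [hh] using this.const_add uC
    have hcomp : HasDerivAt (fun s => φ (h s)) ((fderiv ℂ φ (h s)) w) s := by
      have := (hdiff.hasFDerivAt.restrictScalars ℝ).comp_hasDerivAt s hpath
      exact this
    exact (Complex.imCLM.hasFDerivAt.comp_hasDerivAt s hcomp)
  -- derivative lower bound along the path
  have hderiv_ge : ∀ s ∈ Set.Icc (0:ℝ) 1, a / 2 * S ≤ ((fderiv ℂ φ (h s)) w).im := by
    intro s hs
    have : (fderiv ℂ φ (h s)) w = Complex.I * ((fderiv ℂ φ (h s)) vC) := by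
      rw [hw, map_smul, smul_eq_mul]
    rw [this, Complex.mul_im]
    simp only [Complex.I_re, Complex.I_im, zero_mul, one_mul, zero_add]
    exact hkey _ (hhnorm s hs)
  -- mean value inequality
  have hMVT : a / 2 * S ≤ (φ x).im - (φ uC).im := by
    have hcont : ContinuousOn (fun s => (φ (h s)).im) (Set.Icc 0 1) :=
      fun s hs => ((hg s hs).continuousAt).continuousWithinAt
    have hdiffOn : DifferentiableOn ℝ (fun s => (φ (h s)).im) (interior (Set.Icc (0:ℝ) 1)) := by
      intro s hs
      rw [interior_Icc] at hs
      exact ((hg s (Set.Ioo_subset_Icc_self hs)).differentiableAt).differentiableWithinAt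
    have hge : ∀ s ∈ interior (Set.Icc (0:ℝ) 1), a / 2 * S ≤ deriv (fun s => (φ (h s)).im) s := by
      intro s hs
      rw [interior_Icc] at hs
      rw [(hg s (Set.Ioo_subset_Icc_self hs)).deriv]
      exact hderiv_ge s (Set.Ioo_subset_Icc_self hs)
    have := (convex_Icc (0:ℝ) 1).mul_sub_le_image_sub_of_le_deriv hcont hdiffOn hge
      0 (Set.left_mem_Icc.mpr zero_le_one) 1 (Set.right_mem_Icc.mpr zero_le_one) zero_le_one
    have h1 : h 1 = x := by rw [hh]; simp [hxuw]
    have h0' : h 0 = uC := by rw [hh]; simp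
    simpa [h1, h0'] using this
  -- positivity of B(u) and bound on f(u)
  have hujε : ∀ j, |u j| < ε := fun j => lt_of_le_of_lt (hujx j) (hxε j)
  have hB0 : 0 ≤ (φ uC).im := by
    have := hpos u fun j => lt_of_lt_of_le (hujε j) (le_trans (min_le_left _ _) (min_le_left _ _))
    simpa [huC] using this
  have hfu : ‖f uC‖ ≤ C * (φ uC).im := by
    have := hbd u fun j => lt_of_lt_of_le (hujε j) (le_trans (min_le_left _ _) (min_le_right _ _))
    simpa [huC] using this
  -- Lipschitz bound
  have hxmem : x ∈ t := hball (by
    simp only [Metric.mem_ball, dist_zero_right]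
    have : ε ≤ r1 / 2 := le_trans (min_le_right _ _) (min_le_left _ _)
    linarith [hxnorm])
  have humem : uC ∈ t := hball (by
    simp only [Metric.mem_ball, dist_zero_right]
    have : ε ≤ r1 / 2 := le_trans (min_le_right _ _) (min_le_left _ _)
    linarith [huCnorm.trans_lt hxnorm])
  have hfx : ‖f x - f uC‖ ≤ (K : ℝ) * S := by
    have := hlip.dist_le_mul x hxmem uC humem
    rw [dist_eq_norm, dist_eq_norm] at this
    have hxw : x - uC = w := by rw [hxuw]; abel
    calc ‖f x - f uC‖ ≤ (K : ℝ) * ‖x - uC‖ := this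
    _ = (K : ℝ) * ‖w‖ := by rw [hxw]
    _ ≤ (K : ℝ) * S := by
        apply mul_le_mul_of_nonneg_left _ (K.coe_nonneg)
        calc ‖w‖ ≤ ‖vC‖ := by
              rw [hw, norm_smul]; simp
        _ ≤ S := hvCle
  -- put everything together
  have hfbound : ‖f x‖ ≤ M * ((φ uC).im + S) := by
    calc ‖f x‖ ≤ ‖f uC‖ + ‖f x - f uC‖ := by
          have := norm_add_le (f uC) (f x - f uC); simpa using this
    _ ≤ C * (φ uC).im + (K : ℝ) * S := add_le_add hfu hfx
    _ ≤ M * (φ uC).im + M * S := by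
        apply add_le_add
        · exact mul_le_mul_of_nonneg_right (le_max_left _ _) hB0
        · exact mul_le_mul_of_nonneg_right (le_max_right _ _) hSnn
    _ = M * ((φ uC).im + S) := by ring
  have him : c * ((φ uC).im + S) ≤ (z + φ x).im := by
    have h1 : (z + φ x).im = z.im + (φ x).im := by simp
    have h2 : c * (φ uC).im ≤ (φ uC).im :=
      mul_le_of_le_one_left hB0 (min_le_left _ _)
    have h3 : c * S ≤ a / 2 * S := mul_le_mul_of_nonneg_right (min_le_right _ _) hSnn
    rw [h1]
    nlinarith [hMVT, hz]
  have hnorm_ge : (z + φ x).im ≤ ‖z + φ x‖ :=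
    le_trans (le_abs_self _) (Complex.abs_im_le_norm _)
  calc ‖f x‖ ≤ M * ((φ uC).im + S) := hfbound
  _ = M / c * (c * ((φ uC).im + S)) := by
      rw [← mul_assoc, div_mul_cancel₀ _ (ne_of_gt hcpos)]
  _ ≤ M / c * (z + φ x).im := by
      apply mul_le_mul_of_nonneg_left him (by positivity)
  _ ≤ M / c * ‖z + φ x‖ := mul_le_mul_of_nonneg_left hnorm_ge (by positivity)
end

section
/- The tri-upper-half-plane polynomial p(x,y,z) = x + y + z − 2i(xy + xz + yz) − 3xyz has no zeros in ℍ³, and it factors near the origin as p = u·(z + φ(x,y)) where u(x,y) = 1 − 2i(x+y) − 3xy is nonvanishing at 0 and φ(x,y) = (x + y − 2ixy)/(1 − 2i(x+y) − 3xy). -/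
open Complex

lemma aux_norm_lt (t : ℂ) (ht : 0 < t.im) : ‖1 + I * t‖ < ‖1 - I * t‖ := by
  have h2 : ‖1 + I * t‖ ^ 2 < ‖1 - I * t‖ ^ 2 := by
    simp only [Complex.sq_norm,
      Complex.normSq_apply, Complex.add_re, Complex.add_im, Complex.sub_re,
      Complex.sub_im, Complex.one_re, Complex.one_im, Complex.mul_re,
      Complex.mul_im, Complex.I_re, Complex.I_im]
    nlinarith
  exact lt_of_pow_lt_pow_left₀ 2 (norm_nonneg _) h2

lemma aux_ne (t : ℂ) (ht : 0 < t.im) : 1 - I * t ≠ 0 := by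
  have := aux_norm_lt t ht
  intro h
  rw [h, norm_zero] at this
  exact absurd this (not_lt.mpr (norm_nonneg _))

lemma aux_frac_lt (t : ℂ) (ht : 0 < t.im) : ‖(1 + I * t) / (1 - I * t)‖ < 1 := by
  rw [norm_div]
  have h1 := aux_norm_lt t ht
  have h2 : 0 < ‖1 - I * t‖ := lt_of_le_of_lt (norm_nonneg _) h1
  exact (div_lt_one h2).mpr h1

/-- The polynomial `p(x,y,z) = x+y+z − 2i(xy+xz+yz) − 3xyz` has no zeros in
`ℍ³`, and factors as `p = (1 − 2i(x+y) − 3xy)·(z + (x+y−2ixy)/(1−2i(x+y)−3xy))`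
wherever `1 − 2i(x+y) − 3xy ≠ 0`. -/
theorem stmt_10 :
    (∀ x y z : ℂ, 0 < x.im → 0 < y.im → 0 < z.im →
      x + y + z - 2 * I * (x * y + x * z + y * z) - 3 * x * y * z ≠ 0) ∧
    ((1 : ℂ) - 2 * I * ((0:ℂ) + 0) - 3 * 0 * 0 ≠ 0) ∧
    (∀ x y z : ℂ, 1 - 2 * I * (x + y) - 3 * x * y ≠ 0 →
      x + y + z - 2 * I * (x * y + x * z + y * z) - 3 * x * y * z =
        (1 - 2 * I * (x + y) - 3 * x * y) *
          (z + (x + y - 2 * I * x * y) / (1 - 2 * I * (x + y) - 3 * x * y))) := by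
  refine ⟨?_, by norm_num, ?_⟩
  · intro x y z hx hy hz h
    have hxn := aux_ne x hx
    have hyn := aux_ne y hy
    have hzn := aux_ne z hz
    have key : (3 - ((1 + I * x) / (1 - I * x) + (1 + I * y) / (1 - I * y)
        + (1 + I * z) / (1 - I * z))) * ((1 - I * x) * (1 - I * y) * (1 - I * z))
        = -2 * I * (x + y + z - 2 * I * (x * y + x * z + y * z) - 3 * x * y * z) := by
      field_simp
      ring_nf
      simp only [show (I:ℂ)^3 = -I from by simp [pow_succ, Complex.I_sq], Complex.I_sq]
      ring
    rw [h, mul_zero] at key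
    have hd : ((1 - I * x) * (1 - I * y) * (1 - I * z)) ≠ 0 :=
      mul_ne_zero (mul_ne_zero hxn hyn) hzn
    have hs : (3 : ℂ) = (1 + I * x) / (1 - I * x) + (1 + I * y) / (1 - I * y)
        + (1 + I * z) / (1 - I * z) := by
      have := (mul_eq_zero.mp key).resolve_right hd
      linear_combination this
    have hlt : ‖(1 + I * x) / (1 - I * x) + (1 + I * y) / (1 - I * y)
        + (1 + I * z) / (1 - I * z)‖ < 3 := by
      calc ‖(1 + I * x) / (1 - I * x) + (1 + I * y) / (1 - I * y)
            + (1 + I * z) / (1 - I * z)‖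
          ≤ ‖(1 + I * x) / (1 - I * x) + (1 + I * y) / (1 - I * y)‖
            + ‖(1 + I * z) / (1 - I * z)‖ := norm_add_le _ _
        _ ≤ ‖(1 + I * x) / (1 - I * x)‖ + ‖(1 + I * y) / (1 - I * y)‖
            + ‖(1 + I * z) / (1 - I * z)‖ := by
              have := norm_add_le ((1 + I * x) / (1 - I * x)) ((1 + I * y) / (1 - I * y))
              linarith
        _ < 3 := by
              have h1 := aux_frac_lt x hx
              have h2 := aux_frac_lt y hy
              have h3 := aux_frac_lt z hz
              linarith
    rw [← hs] at hlt
    simp at hlt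
  · intro x y z h
    rw [mul_add (1 - 2 * I * (x + y) - 3 * x * y) z, mul_div_assoc', mul_div_cancel_left₀ _ h]
    ring
end

section
/- Let G(u,v) = u² + u²v² + v⁴. There is no constant C and neighborhood of (0,0) on which |uv| ≤ C·G(u,v) holds; likewise v², v³, u, v, and constants are not bounded by C·G near (0,0). Consequently, a polynomial q(u,v) = a + bu + cv + duv + ev² + gv³ satisfying |q(u,v)| ≤ C·G(u,v) near (0,0) must have a = b = c = d = e = g = 0. -/
/-- If a nonnegative real `r` satisfies `r ≤ K * v` for all sufficiently
small positive `v`, then `r = 0`. -/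
lemma aux_small (r K δ : ℝ) (hδ : 0 < δ) (hr : 0 ≤ r)
    (h : ∀ v : ℝ, 0 < v → v < δ → r ≤ K * v) : r = 0 := by
  by_contra hne
  have hrpos : 0 < r := lt_of_le_of_ne hr (Ne.symm hne)
  have hK : 0 < K := by
    have := h (δ/2) (by positivity) (by linarith)
    nlinarith
  set v := min (δ/2) (r/(2*K)) with hv
  have hv0 : 0 < v := lt_min (by positivity) (by positivity)
  have hvδ : v < δ := lt_of_le_of_lt (min_le_left _ _) (by linarith)
  have h1 := h v hv0 hvδ
  have h2 : v ≤ r/(2*K) := min_le_right _ _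
  have : K * v ≤ r/2 := by
    calc K * v ≤ K * (r/(2*K)) := by nlinarith
    _ = r/2 := by field_simp
  linarith

lemma aux_one (K δ : ℝ) (hδ : 0 < δ)
    (h : ∀ v : ℝ, 0 < v → v < δ → (1:ℝ) ≤ K * v) : False := by
  have := aux_small 1 K δ hδ (by norm_num) h
  norm_num at this

set_option maxHeartbeats 1000000 in
/-- For `G(u,v) = u² + u²v² + v⁴`: none of the functions `uv`, `v²`, `v³`,
`u`, `v`, `1` is bounded by `C·G` on any neighborhood of `(0,0)`; consequently
a polynomial `q(u,v) = a + bu + cv + duv + ev² + gv³` satisfying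
`|q| ≤ C·G` near `(0,0)` must have all coefficients zero. -/
theorem stmt_14 :
    (¬ ∃ C : ℝ, ∃ ε > 0, ∀ u v : ℝ, |u| < ε → |v| < ε →
        |u * v| ≤ C * (u ^ 2 + u ^ 2 * v ^ 2 + v ^ 4)) ∧
    (¬ ∃ C : ℝ, ∃ ε > 0, ∀ u v : ℝ, |u| < ε → |v| < ε →
        |v ^ 2| ≤ C * (u ^ 2 + u ^ 2 * v ^ 2 + v ^ 4)) ∧
    (¬ ∃ C : ℝ, ∃ ε > 0, ∀ u v : ℝ, |u| < ε → |v| < ε →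
        |v ^ 3| ≤ C * (u ^ 2 + u ^ 2 * v ^ 2 + v ^ 4)) ∧
    (¬ ∃ C : ℝ, ∃ ε > 0, ∀ u v : ℝ, |u| < ε → |v| < ε →
        |u| ≤ C * (u ^ 2 + u ^ 2 * v ^ 2 + v ^ 4)) ∧
    (¬ ∃ C : ℝ, ∃ ε > 0, ∀ u v : ℝ, |u| < ε → |v| < ε →
        |v| ≤ C * (u ^ 2 + u ^ 2 * v ^ 2 + v ^ 4)) ∧
    (¬ ∃ C : ℝ, ∃ ε > 0, ∀ u v : ℝ, |u| < ε → |v| < ε →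
        (1 : ℝ) ≤ C * (u ^ 2 + u ^ 2 * v ^ 2 + v ^ 4)) ∧
    (∀ a b c d e g : ℂ,
      (∃ C : ℝ, ∃ ε > 0, ∀ u v : ℝ, |u| < ε → |v| < ε →
        ‖a + b * u + c * v + d * (u * v) + e * v ^ 2 + g * v ^ 3‖ ≤
          C * (u ^ 2 + u ^ 2 * v ^ 2 + v ^ 4)) →
      a = 0 ∧ b = 0 ∧ c = 0 ∧ d = 0 ∧ e = 0 ∧ g = 0) := by
  refine ⟨?_, ?_, ?_, ?_, ?_, ?_, ?_⟩
  · -- uv : substitute u = v²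
    rintro ⟨C, ε, hε, h⟩
    refine aux_one (3 * |C|) (min ε 1) (lt_min hε one_pos) (fun v hv0 hvδ => ?_)
    have hv1 : v < 1 := lt_of_lt_of_le hvδ (min_le_right _ _)
    have hvε : v < ε := lt_of_lt_of_le hvδ (min_le_left _ _)
    have hu : |v ^ 2| < ε := by
      rw [abs_of_nonneg (by positivity)]; nlinarith
    have h1 := h (v ^ 2) v hu (by rw [abs_of_pos hv0]; exact hvε)
    rw [abs_of_pos (by positivity)] at h1
    have hC : C ≤ |C| := le_abs_self C
    have k1 : C * ((v ^ 2) ^ 2 + (v ^ 2) ^ 2 * v ^ 2 + v ^ 4) ≤ |C| * (2 * v ^ 4 + v ^ 6) := by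
      have := mul_le_mul_of_nonneg_right hC (by positivity : (0:ℝ) ≤ (v ^ 2) ^ 2 + (v ^ 2) ^ 2 * v ^ 2 + v ^ 4)
      nlinarith
    have p1 : 0 ≤ |C| * v ^ 4 * (1 - v ^ 2) :=
      mul_nonneg (mul_nonneg (abs_nonneg C) (pow_pos hv0 4).le) (by nlinarith)
    have k2 : |C| * (2 * v ^ 4 + v ^ 6) ≤ (3 * |C| * v) * v ^ 3 := by nlinarith [p1]
    nlinarith [pow_pos hv0 3]
  · -- v² : u = 0
    rintro ⟨C, ε, hε, h⟩
    refine aux_one (|C|) (min ε 1) (lt_min hε one_pos) (fun v hv0 hvδ => ?_)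
    have hv1 : v < 1 := lt_of_lt_of_le hvδ (min_le_right _ _)
    have hvε : v < ε := lt_of_lt_of_le hvδ (min_le_left _ _)
    have h1 := h 0 v (by simpa using hε) (by rw [abs_of_pos hv0]; exact hvε)
    rw [abs_of_nonneg (by positivity)] at h1
    have hC : C ≤ |C| := le_abs_self C
    have k1 : C * (0 ^ 2 + 0 ^ 2 * v ^ 2 + v ^ 4) ≤ |C| * v ^ 4 := by
      have := mul_le_mul_of_nonneg_right hC (by positivity : (0:ℝ) ≤ v ^ 4)
      nlinarith
    have k2 : |C| * v ^ 4 ≤ (|C| * v) * v ^ 2 := by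
      nlinarith [mul_nonneg (abs_nonneg C) (pow_pos hv0 3).le, abs_nonneg C]
    nlinarith [pow_pos hv0 2]
  · -- v³ : u = 0
    rintro ⟨C, ε, hε, h⟩
    refine aux_one (|C|) (min ε 1) (lt_min hε one_pos) (fun v hv0 hvδ => ?_)
    have hv1 : v < 1 := lt_of_lt_of_le hvδ (min_le_right _ _)
    have hvε : v < ε := lt_of_lt_of_le hvδ (min_le_left _ _)
    have h1 := h 0 v (by simpa using hε) (by rw [abs_of_pos hv0]; exact hvε)
    rw [abs_of_nonneg (by positivity)] at h1
    have hC : C ≤ |C| := le_abs_self C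
    have k1 : C * (0 ^ 2 + 0 ^ 2 * v ^ 2 + v ^ 4) ≤ |C| * v ^ 4 := by
      have := mul_le_mul_of_nonneg_right hC (by positivity : (0:ℝ) ≤ v ^ 4)
      nlinarith
    have k2 : |C| * v ^ 4 ≤ (|C| * v) * v ^ 3 := by
      nlinarith [mul_nonneg (abs_nonneg C) (pow_pos hv0 4).le, abs_nonneg C]
    nlinarith [pow_pos hv0 3]
  · -- u : v = 0
    rintro ⟨C, ε, hε, h⟩
    refine aux_one (|C|) (min ε 1) (lt_min hε one_pos) (fun v hv0 hvδ => ?_)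
    have hv1 : v < 1 := lt_of_lt_of_le hvδ (min_le_right _ _)
    have hvε : v < ε := lt_of_lt_of_le hvδ (min_le_left _ _)
    have h1 := h v 0 (by rw [abs_of_pos hv0]; exact hvε) (by simpa using hε)
    rw [abs_of_pos hv0] at h1
    have hC : C ≤ |C| := le_abs_self C
    have k1 : C * (v ^ 2 + v ^ 2 * 0 ^ 2 + 0 ^ 4) ≤ (|C| * v) * v := by
      have := mul_le_mul_of_nonneg_right hC (by positivity : (0:ℝ) ≤ v ^ 2)
      nlinarith
    nlinarith
  · -- v : u = 0
    rintro ⟨C, ε, hε, h⟩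
    refine aux_one (|C|) (min ε 1) (lt_min hε one_pos) (fun v hv0 hvδ => ?_)
    have hv1 : v < 1 := lt_of_lt_of_le hvδ (min_le_right _ _)
    have hvε : v < ε := lt_of_lt_of_le hvδ (min_le_left _ _)
    have h1 := h 0 v (by simpa using hε) (by rw [abs_of_pos hv0]; exact hvε)
    rw [abs_of_pos hv0] at h1
    have hC : C ≤ |C| := le_abs_self C
    have p1 : 0 ≤ |C| * v ^ 2 * (1 - v ^ 2) :=
      mul_nonneg (mul_nonneg (abs_nonneg C) (pow_pos hv0 2).le) (by nlinarith)
    have k1 : C * (0 ^ 2 + 0 ^ 2 * v ^ 2 + v ^ 4) ≤ (|C| * v) * v := by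
      have := mul_le_mul_of_nonneg_right hC (by positivity : (0:ℝ) ≤ v ^ 4)
      nlinarith [p1]
    nlinarith
  · -- 1 : u = v = 0
    rintro ⟨C, ε, hε, h⟩
    have := h 0 0 (by simpa using hε) (by simpa using hε)
    norm_num at this
  · -- the polynomial part
    rintro a b c d e g ⟨C, ε, hε, h⟩
    have hCabs : C ≤ |C| := le_abs_self C
    -- a = 0
    have ha : a = 0 := by
      have h0 := h 0 0 (by simpa using hε) (by simpa using hε)
      simp at h0
      exact h0
    subst ha
    -- b = 0 : take v = 0
    have hb : b = 0 := by
      have key : ‖b‖ = 0 := by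
        refine aux_small ‖b‖ |C| (min ε 1) (lt_min hε one_pos) (norm_nonneg _)
          (fun v hv0 hvδ => ?_)
        have hv1 : v < 1 := lt_of_lt_of_le hvδ (min_le_right _ _)
        have hvε : v < ε := lt_of_lt_of_le hvδ (min_le_left _ _)
        have h1 := h v 0 (by rw [abs_of_pos hv0]; exact hvε) (by simpa using hε)
        simp only [Complex.ofReal_zero, mul_zero, zero_mul, add_zero, zero_add,
          ne_eq, zero_pow, OfNat.ofNat_ne_zero, not_false_eq_true] at h1
        rw [norm_mul, Complex.norm_real, Real.norm_eq_abs, abs_of_pos hv0] at h1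
        nlinarith [norm_nonneg b, pow_pos hv0 2]
      exact norm_eq_zero.mp key
    subst hb
    -- bounds along u = 0 : ‖c v + e v² + g v³‖ ≤ C v⁴
    have hzero : ∀ v : ℝ, 0 < v → v < min ε 1 →
        ‖c * v + e * (v:ℂ) ^ 2 + g * (v:ℂ) ^ 3‖ ≤ |C| * v ^ 4 := by
      intro v hv0 hvδ
      have hvε : v < ε := lt_of_lt_of_le hvδ (min_le_left _ _)
      have h1 := h 0 v (by simpa using hε) (by rw [abs_of_pos hv0]; exact hvε)
      simp only [Complex.ofReal_zero, mul_zero, zero_mul, add_zero, zero_add,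
        ne_eq, zero_pow, OfNat.ofNat_ne_zero, not_false_eq_true] at h1
      have : C * (0 + 0 * v ^ 2 + v ^ 4) ≤ |C| * v ^ 4 := by
        have : (0:ℝ) ≤ v ^ 4 := by positivity
        nlinarith
      calc ‖c * v + e * (v:ℂ) ^ 2 + g * (v:ℂ) ^ 3‖
          ≤ C * ((0:ℝ) ^ 2 + (0:ℝ) ^ 2 * v ^ 2 + v ^ 4) := by
            convert h1 using 2 <;> push_cast <;> ring
        _ ≤ |C| * v ^ 4 := by norm_num; nlinarith [pow_pos hv0 4]
      done
    -- c = 0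
    have hc : c = 0 := by
      have key : ‖c‖ = 0 := by
        refine aux_small ‖c‖ (|C| + ‖e‖ + ‖g‖) (min ε 1) (lt_min hε one_pos)
          (norm_nonneg _) (fun v hv0 hvδ => ?_)
        have hv1 : v < 1 := lt_of_lt_of_le hvδ (min_le_right _ _)
        have h1 := hzero v hv0 hvδ
        have h2 : ‖c * (v:ℂ)‖ ≤ ‖c * v + e * (v:ℂ) ^ 2 + g * (v:ℂ) ^ 3‖
            + ‖e * (v:ℂ) ^ 2‖ + ‖g * (v:ℂ) ^ 3‖ := by
          have h4 := norm_sub_le (c * v + e * (v:ℂ) ^ 2 + g * (v:ℂ) ^ 3)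
            (e * (v:ℂ) ^ 2 + g * (v:ℂ) ^ 3)
          have h5 : c * v + e * (v:ℂ) ^ 2 + g * (v:ℂ) ^ 3
              - (e * (v:ℂ) ^ 2 + g * (v:ℂ) ^ 3) = c * (v:ℂ) := by ring
          rw [h5] at h4
          have h3 := norm_add_le (e * (v:ℂ) ^ 2) (g * (v:ℂ) ^ 3)
          linarith
        rw [norm_mul, Complex.norm_real, Real.norm_eq_abs, abs_of_pos hv0] at h2
        rw [norm_mul, norm_pow, Complex.norm_real, Real.norm_eq_abs, abs_of_pos hv0] at h2
        rw [norm_mul, norm_pow, Complex.norm_real, Real.norm_eq_abs, abs_of_pos hv0] at h2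
        have p1 : 0 ≤ |C| * v ^ 2 * (1 - v ^ 2) :=
          mul_nonneg (mul_nonneg (abs_nonneg C) (pow_pos hv0 2).le) (by nlinarith)
        have p2 : 0 ≤ ‖g‖ * v ^ 2 * (1 - v) :=
          mul_nonneg (mul_nonneg (norm_nonneg g) (pow_pos hv0 2).le) (by linarith)
        have k : ‖c‖ * v ≤ ((|C| + ‖e‖ + ‖g‖) * v) * v := by nlinarith [p1, p2]
        nlinarith [k, hv0]
      exact norm_eq_zero.mp key
    subst hc
    -- e = 0
    have he : e = 0 := by
      have key : ‖e‖ = 0 := by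
        refine aux_small ‖e‖ (|C| + ‖g‖) (min ε 1) (lt_min hε one_pos)
          (norm_nonneg _) (fun v hv0 hvδ => ?_)
        have hv1 : v < 1 := lt_of_lt_of_le hvδ (min_le_right _ _)
        have h1 := hzero v hv0 hvδ
        simp only [zero_mul, zero_add] at h1
        have h2 : ‖e * (v:ℂ) ^ 2‖ ≤ ‖e * (v:ℂ) ^ 2 + g * (v:ℂ) ^ 3‖
            + ‖g * (v:ℂ) ^ 3‖ := by
          have h4 := norm_sub_le (e * (v:ℂ) ^ 2 + g * (v:ℂ) ^ 3) (g * (v:ℂ) ^ 3)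
          have h5 : e * (v:ℂ) ^ 2 + g * (v:ℂ) ^ 3 - g * (v:ℂ) ^ 3
              = e * (v:ℂ) ^ 2 := by ring
          rw [h5] at h4
          exact h4
        rw [norm_mul, norm_pow, Complex.norm_real, Real.norm_eq_abs, abs_of_pos hv0] at h2
        rw [norm_mul, norm_pow, Complex.norm_real, Real.norm_eq_abs, abs_of_pos hv0] at h2
        have p1 : 0 ≤ |C| * v ^ 3 * (1 - v) :=
          mul_nonneg (mul_nonneg (abs_nonneg C) (pow_pos hv0 3).le) (by linarith)
        have k : ‖e‖ * v ^ 2 ≤ ((|C| + ‖g‖) * v) * v ^ 2 := by nlinarith [p1]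
        nlinarith [k, pow_pos hv0 2]
      exact norm_eq_zero.mp key
    subst he
    -- g = 0
    have hg : g = 0 := by
      have key : ‖g‖ = 0 := by
        refine aux_small ‖g‖ (|C|) (min ε 1) (lt_min hε one_pos)
          (norm_nonneg _) (fun v hv0 hvδ => ?_)
        have hv1 : v < 1 := lt_of_lt_of_le hvδ (min_le_right _ _)
        have h1 := hzero v hv0 hvδ
        simp only [zero_mul, zero_add] at h1
        rw [norm_mul, norm_pow, Complex.norm_real, Real.norm_eq_abs, abs_of_pos hv0] at h1
        nlinarith [norm_nonneg g, pow_pos hv0 3, pow_pos hv0 4]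
      exact norm_eq_zero.mp key
    subst hg
    -- d = 0 : substitute u = v²
    have hd : d = 0 := by
      have key : ‖d‖ = 0 := by
        refine aux_small ‖d‖ (3 * |C|) (min ε 1) (lt_min hε one_pos)
          (norm_nonneg _) (fun v hv0 hvδ => ?_)
        have hv1 : v < 1 := lt_of_lt_of_le hvδ (min_le_right _ _)
        have hvε : v < ε := lt_of_lt_of_le hvδ (min_le_left _ _)
        have hu : |v ^ 2| < ε := by
          rw [abs_of_nonneg (by positivity)]; nlinarith
        have h1 := h (v ^ 2) v hu (by rw [abs_of_pos hv0]; exact hvε)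
        simp only [zero_mul, zero_add, add_zero] at h1
        push_cast at h1
        have heq : d * ((v:ℂ) ^ 2 * (v:ℂ)) = d * ((v:ℂ) ^ 3) := by ring
        rw [heq, norm_mul, norm_pow, Complex.norm_real, Real.norm_eq_abs, abs_of_pos hv0] at h1
        have t := mul_le_mul_of_nonneg_right hCabs
          (by positivity : (0:ℝ) ≤ (v ^ 2) ^ 2 + (v ^ 2) ^ 2 * v ^ 2 + v ^ 4)
        have p1 : 0 ≤ |C| * v ^ 4 * (1 - v ^ 2) :=
          mul_nonneg (mul_nonneg (abs_nonneg C) (pow_pos hv0 4).le) (by nlinarith)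
        have k : ‖d‖ * v ^ 3 ≤ (3 * |C| * v) * v ^ 3 := by nlinarith [p1, t]
        nlinarith [k, pow_pos hv0 3]
      exact norm_eq_zero.mp key
    exact ⟨rfl, rfl, rfl, hd, rfl, rfl⟩
end
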